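/- arXiv:2604.26992 — 6 statements merged into one kernel-verified Lean document; each statement's English description precedes it below -/
import Mathlib

section
/- Fix δ ∈ (0,1/4) and εmax ∈ (0,1/2). There exists a constant c > 0 depending only on δ and εmax such that the following holds for every integer n ≥ 2 and every σ > 0. Let (l,u) be any confidence-interval procedure on n samples and r : [0,εmax] → (0,∞) any function such that for all θ ∈ ℝ, all ε ∈ [0,εmax], and all probability measures Q on ℝ: (coverage over Huber's model) H_{θ,σ,ε,Q}^{⊗n}( {x : l(x) ≤ θ ≤ u(x)} ) ≥ 1 − δ, where H_{θ,σ,ε,Q} = (1−ε)·N(θ,σ²) + ε·Q; and (length over Efron's model) P_{θ,σ,ε,Q}^{⊗n}( {x : u(x) − l(x) ≤ r(ε)} ) ≥ 1 − δ. Then r(ε) ≥ c·σ/√(log n) for every ε ∈ [0,εmax]. -/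
open MeasureTheory ProbabilityTheory Real
open scoped ENNReal NNReal

/-- Gaussian measure on `ℝ` with mean `m` and variance `v`. -/
noncomputable def gauss (m v : ℝ) : Measure ℝ := gaussianReal m (Real.toNNReal v)

/-- Efron's Gaussian two-groups model:
`(1-ε)·N(θ,σ²) + ε·(Q ∗ N(0,σ²))`. -/
noncomputable def efron (θ σ ε : ℝ) (Q : Measure ℝ) : Measure ℝ :=
  (ENNReal.ofReal (1 - ε)) • gauss θ (σ ^ 2) +
    (ENNReal.ofReal ε) • (Measure.conv Q (gauss 0 (σ ^ 2)))

/-- The `n`-fold product (i.i.d.) measure on `ℝⁿ`. -/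
noncomputable def iid (n : ℕ) (P : Measure ℝ) : Measure (Fin n → ℝ) :=
  Measure.pi fun _ => P

/-- Huber's contamination model: `(1-ε)·N(θ,σ²) + ε·Q`. -/
noncomputable def huber (θ σ ε : ℝ) (Q : Measure ℝ) : Measure ℝ :=
  (ENNReal.ofReal (1 - ε)) • gauss θ (σ ^ 2) + (ENNReal.ofReal ε) • Q

namespace NoAdaptAux

lemma lintegral_pi_prod' {E : Type*} [MeasurableSpace E] {n : ℕ}
    (μ : Measure E) [SigmaFinite μ]
    (f : Fin n → E → ℝ≥0∞) (hf : ∀ i, Measurable (f i)) :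
    ∫⁻ x : Fin n → E, ∏ i, f i (x i) ∂(Measure.pi fun _ => μ) = ∏ i, ∫⁻ x, f i x ∂μ := by
  induction n with
  | zero => simp [Measure.pi_univ]
  | succ n ih =>
      calc
        _ = ∫⁻ p : E × (Fin n → E),
              f 0 p.1 * ∏ i : Fin n, f (Fin.succ i) (p.2 i)
              ∂(μ.prod (Measure.pi fun _ : Fin n => μ)) := by
          rw [← ((measurePreserving_piFinSuccAbove (fun _ : Fin (n+1) => μ) 0).symm).lintegral_comp_emb
            (MeasurableEquiv.measurableEmbedding _)]
          congr 1
          ext p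
          rw [Fin.prod_univ_succ]
          simp [MeasurableEquiv.piFinSuccAbove_symm_apply, Fin.insertNthEquiv,
            Fin.insertNth_zero, Fin.zero_succAbove]
        _ = (∫⁻ x, f 0 x ∂μ) *
              ∫⁻ y : Fin n → E, ∏ i : Fin n, f (Fin.succ i) (y i)
                ∂(Measure.pi fun _ : Fin n => μ) :=
          lintegral_prod_mul (hf 0).aemeasurable
            (Finset.measurable_prod _ fun i _ => (hf _).comp (measurable_pi_apply i)).aemeasurable
        _ = _ := by rw [ih _ (fun i => hf _), Fin.prod_univ_succ]

lemma pi_withDensity' {E : Type*} [MeasurableSpace E] (μ : Measure E) [SigmaFinite μ] {n : ℕ}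
    (h : Fin n → E → ℝ≥0∞) (hh : ∀ i, Measurable (h i))
    [∀ i : Fin n, SigmaFinite (μ.withDensity (h i))] :
    Measure.pi (fun i => μ.withDensity (h i)) =
      (Measure.pi fun _ : Fin n => μ).withDensity (fun x => ∏ i, h i (x i)) := by
  refine Measure.pi_eq fun s hs => ?_
  rw [withDensity_apply _ (MeasurableSet.univ_pi hs)]
  have : ∀ x : Fin n → E, (Set.pi Set.univ s).indicator (fun x => ∏ i, h i (x i)) x
      = ∏ i, (s i).indicator (h i) (x i) := by
    intro x
    by_cases hx : x ∈ Set.pi Set.univ s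
    · rw [Set.indicator_of_mem hx]
      exact Finset.prod_congr rfl fun i _ => (Set.indicator_of_mem (hx i trivial) _).symm
    · rw [Set.indicator_of_notMem hx]
      symm
      simp only [Set.mem_pi, Set.mem_univ, forall_true_left] at hx
      push_neg at hx
      obtain ⟨i, hi⟩ := hx
      exact Finset.prod_eq_zero (Finset.mem_univ i) (Set.indicator_of_notMem hi _)
  rw [← lintegral_indicator (MeasurableSet.univ_pi hs)]
  simp_rw [this]
  rw [lintegral_pi_prod' μ _ (fun i => (hh i).indicator (hs i))]
  exact Finset.prod_congr rfl fun i _ =>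
    (lintegral_indicator (hs i) _).trans (withDensity_apply _ (hs i)).symm

lemma dirac_conv_gaussianReal (a : ℝ) (V : ℝ≥0) :
    Measure.conv (Measure.dirac a) (gaussianReal 0 V) = gaussianReal a V := by
  show Measure.map (fun p : ℝ × ℝ => p.1 + p.2) ((Measure.dirac a).prod (gaussianReal 0 V))
      = gaussianReal a V
  rw [Measure.dirac_prod, Measure.map_map (by fun_prop) (by fun_prop)]
  have h : ((fun p : ℝ × ℝ => p.1 + p.2) ∘ (Prod.mk a)) = (· + a) := by
    funext x; simp [add_comm]
  rw [h, gaussianReal_map_add_const a, zero_add]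

lemma gauss_tail_dom {V : ℝ≥0} (hV : 0 < (V : ℝ)) {εm μx x0 : ℝ}
    (hεm0 : 0 ≤ εm) (hεm1 : εm < 1) (hμx : 0 < μx) (hx0 : x0 ≤ 0)
    (h2 : 2 * μx * x0 = μx ^ 2 + 2 * (V : ℝ) * Real.log (1 - εm)) (x : ℝ) :
    max ((1 - εm) * gaussianPDFReal 0 V x - gaussianPDFReal μx V x) 0 ≤
      Real.exp (-x0 ^ 2 / (2 * (V : ℝ))) * gaussianPDFReal x0 V x := by
  have h2V : (0:ℝ) < 2 * (V : ℝ) := by linarith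
  have hRHS : 0 ≤ Real.exp (-x0 ^ 2 / (2 * (V : ℝ))) * gaussianPDFReal x0 V x :=
    mul_nonneg (Real.exp_pos _).le (gaussianPDFReal_nonneg _ _ _)
  rcases le_or_gt ((1 - εm) * gaussianPDFReal 0 V x) (gaussianPDFReal μx V x) with h | h
  · rw [max_eq_right (sub_nonpos.mpr h)]; exact hRHS
  · rw [max_eq_left (sub_nonneg.mpr h.le)]
    have h1εm : (0:ℝ) < 1 - εm := by linarith
    have hC : (0:ℝ) < (Real.sqrt (2 * Real.pi * V))⁻¹ := by
      rw [inv_pos]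
      exact Real.sqrt_pos.mpr (by nlinarith [Real.pi_pos])
    -- first: x ≤ x0
    have hx_le : x ≤ x0 := by
      have hlt := h
      rw [gaussianPDFReal, gaussianPDFReal] at hlt
      have hE : Real.exp (-(x - μx) ^ 2 / (2 * (V : ℝ)))
          < (1 - εm) * Real.exp (-(x - 0) ^ 2 / (2 * (V : ℝ))) := by
        have hre : (1 - εm) * ((Real.sqrt (2 * Real.pi * V))⁻¹
            * Real.exp (-(x - 0) ^ 2 / (2 * (V : ℝ))))
            = (Real.sqrt (2 * Real.pi * V))⁻¹
            * ((1 - εm) * Real.exp (-(x - 0) ^ 2 / (2 * (V : ℝ)))) := by ring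
        rw [hre] at hlt
        exact lt_of_mul_lt_mul_left hlt hC.le
      rw [show (1 - εm) * Real.exp (-(x - 0) ^ 2 / (2 * (V : ℝ)))
          = Real.exp (Real.log (1 - εm) + -(x - 0) ^ 2 / (2 * (V : ℝ))) by
        rw [Real.exp_add, Real.exp_log h1εm]] at hE
      have hexp := Real.exp_lt_exp.mp hE
      have hmul := mul_lt_mul_of_pos_right hexp h2V
      have ha : (-(x - μx) ^ 2 / (2 * (V : ℝ))) * (2 * (V : ℝ)) = -(x - μx) ^ 2 := by
        field_simp
      have hb : (Real.log (1 - εm) + -(x - 0) ^ 2 / (2 * (V : ℝ))) * (2 * (V : ℝ))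
          = 2 * (V : ℝ) * Real.log (1 - εm) + -(x - 0) ^ 2 := by
        field_simp
      rw [ha, hb] at hmul
      have hxx : 2 * μx * x < 2 * μx * x0 := by nlinarith
      exact le_of_lt (lt_of_mul_lt_mul_left hxx (by linarith))
    have hexp_le : Real.exp (-(x - 0) ^ 2 / (2 * (V : ℝ)))
        ≤ Real.exp (-x0 ^ 2 / (2 * (V : ℝ)) + -(x - x0) ^ 2 / (2 * (V : ℝ))) := by
      apply Real.exp_le_exp.mpr
      rw [← add_div, div_le_div_iff_of_pos_right h2V]
      nlinarith [mul_nonneg (neg_nonneg.mpr hx0) (sub_nonneg.mpr hx_le)]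
    calc (1 - εm) * gaussianPDFReal 0 V x - gaussianPDFReal μx V x
        ≤ (1 - εm) * gaussianPDFReal 0 V x := by
          nlinarith [gaussianPDFReal_nonneg μx V x]
      _ ≤ gaussianPDFReal 0 V x := by
          nlinarith [gaussianPDFReal_nonneg 0 V x]
      _ ≤ Real.exp (-x0 ^ 2 / (2 * (V : ℝ))) * gaussianPDFReal x0 V x := by
          rw [gaussianPDFReal, gaussianPDFReal]
          calc (Real.sqrt (2 * Real.pi * V))⁻¹ * Real.exp (-(x - 0) ^ 2 / (2 * (V : ℝ)))
              ≤ (Real.sqrt (2 * Real.pi * V))⁻¹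
                * Real.exp (-x0 ^ 2 / (2 * (V : ℝ)) + -(x - x0) ^ 2 / (2 * (V : ℝ))) :=
                mul_le_mul_of_nonneg_left hexp_le hC.le
            _ = Real.exp (-x0 ^ 2 / (2 * (V : ℝ)))
                * ((Real.sqrt (2 * Real.pi * V))⁻¹
                  * Real.exp (-(x - x0) ^ 2 / (2 * (V : ℝ)))) := by
                rw [Real.exp_add]; ring

lemma max_add_max (A B : ℝ) : B + max (A - B) 0 = A + max (B - A) 0 := by
  rcases le_total A B with h | h
  · rw [max_eq_right (sub_nonpos.mpr h), max_eq_left (sub_nonneg.mpr h)]; ring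
  · rw [max_eq_left (sub_nonneg.mpr h), max_eq_right (sub_nonpos.mpr h)]; ring

end NoAdaptAux
set_option maxHeartbeats 1000000 in
open NoAdaptAux in
/-- No adaptation between Huber's and Efron's models, known variance (Theorem 6.1, part 1):
any procedure with adaptive coverage over all Huber's models and length `r(ε)` over all
Efron's models must satisfy `r(ε) ≥ c·σ/√(log n)`. -/
theorem no_adaptation_known_variance (δ εmax : ℝ)
    (hδ : δ ∈ Set.Ioo (0:ℝ) (1/4)) (hεm : εmax ∈ Set.Ioo (0:ℝ) (1/2)) :
    ∃ c : ℝ, 0 < c ∧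
      ∀ n : ℕ, 2 ≤ n → ∀ σ : ℝ, 0 < σ →
        ∀ l u : (Fin n → ℝ) → ℝ, Measurable l → Measurable u → (∀ x, l x ≤ u x) →
          ∀ r : ℝ → ℝ, (∀ ε ∈ Set.Icc (0:ℝ) εmax, 0 < r ε) →
            (∀ (θ ε : ℝ), ε ∈ Set.Icc 0 εmax →
              ∀ Q : Measure ℝ, IsProbabilityMeasure Q →
                ENNReal.ofReal (1 - δ) ≤
                    iid n (huber θ σ ε Q) {x | l x ≤ θ ∧ θ ≤ u x} ∧
                ENNReal.ofReal (1 - δ) ≤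
                    iid n (efron θ σ ε Q) {x | u x - l x ≤ r ε}) →
            ∀ ε ∈ Set.Icc (0:ℝ) εmax,
              c * σ / Real.sqrt (Real.log n) ≤ r ε := by
  obtain ⟨hδ0, hδ4⟩ := hδ
  obtain ⟨hεm0, hεm2⟩ := hεm
  have hεm1 : εmax < 1 := by linarith
  have h1εm : (0:ℝ) < 1 - εmax := by linarith
  have hL0 : 0 < -Real.log (1 - εmax) := by
    have := Real.log_neg h1εm (by linarith)
    linarith
  refine ⟨-Real.log (1 - εmax) / 4, by linarith, ?_⟩
  intro n hn σ hσ l u hl hu hlu r hrpos hcov ε hε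
  -- abbreviations
  set L : ℝ := -Real.log (1 - εmax) with hLdef
  have hlog1ε : Real.log (1 - εmax) = -L := by rw [hLdef]; ring
  have hLlog2 : L ≤ Real.log 2 := by
    have h1 : Real.log (1/2 : ℝ) ≤ Real.log (1 - εmax) :=
      Real.log_le_log (by norm_num) (by linarith)
    rw [show (1/2 : ℝ) = 2⁻¹ by norm_num, Real.log_inv] at h1
    linarith
  have hn2 : (2:ℝ) ≤ (n:ℝ) := by exact_mod_cast hn
  have hn0 : (0:ℝ) < (n:ℝ) := by linarith
  set k : ℝ := Real.log n with hkdef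
  have hk2 : Real.log 2 ≤ k := Real.log_le_log two_pos hn2
  have hk0 : 0 < k := lt_of_lt_of_le (Real.log_pos one_lt_two) hk2
  have hlog2pos : (0:ℝ) < Real.log 2 := Real.log_pos one_lt_two
  set y : ℝ := Real.sqrt k with hydef
  have hy0 : 0 < y := Real.sqrt_pos.mpr hk0
  have hy2 : y ^ 2 = k := Real.sq_sqrt hk0.le
  have hv0 : (0:ℝ) < σ ^ 2 := by positivity
  set V : ℝ≥0 := Real.toNNReal (σ ^ 2) with hVdef
  have hVc : (V : ℝ) = σ ^ 2 := Real.coe_toNNReal _ hv0.le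
  have hV0 : V ≠ 0 := by
    intro h
    rw [h] at hVc
    simp at hVc
    nlinarith
  have hVpos : (0:ℝ) < (V:ℝ) := by rw [hVc]; exact hv0
  set μx : ℝ := L / 4 * σ / y with hμxdef
  have hμx0 : 0 < μx := by positivity
  set x0 : ℝ := μx / 2 + σ ^ 2 * Real.log (1 - εmax) / μx with hx0def
  have h2x0 : 2 * μx * x0 = μx ^ 2 + 2 * σ ^ 2 * Real.log (1 - εmax) := by
    rw [hx0def]; field_simp
  have hx0v : x0 = L * σ / (8 * y) - 4 * σ * y := by
    rw [hx0def, hlog1ε, hμxdef]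
    field_simp
    ring
  have hx0neg : x0 ≤ 0 := by
    rw [hx0v]
    have hky : L ≤ 32 * y ^ 2 := by
      rw [hy2]; linarith
    have h1 : L * σ / (8 * y) ≤ 4 * σ * y := by
      rw [div_le_iff₀ (by positivity)]
      calc L * σ ≤ (32 * y ^ 2) * σ := mul_le_mul_of_nonneg_right hky hσ.le
        _ = 4 * σ * y * (8 * y) := by ring
    linarith
  have hlog8 : Real.log 8 = 3 * Real.log 2 := by
    rw [show (8:ℝ) = 2 ^ (3:ℕ) by norm_num, Real.log_pow]
    push_cast; ring
  have hx0sq : Real.log 8 + k ≤ x0 ^ 2 / (2 * σ ^ 2) := by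
    have hx0' : x0 = σ * (L - 32 * y ^ 2) / (8 * y) := by
      rw [hx0v]; field_simp; ring
    have hform : x0 ^ 2 / (2 * σ ^ 2) = (L - 32 * y ^ 2) ^ 2 / (128 * y ^ 2) := by
      rw [hx0']; field_simp; ring
    rw [hform, le_div_iff₀ (by positivity)]
    have e1 : (Real.log 8 + k) * (128 * y ^ 2) = 384 * (Real.log 2 * k) + 128 * k ^ 2 := by
      rw [hlog8, hy2]; ring
    have e2 : Real.log 2 * k ≤ k ^ 2 := by
      rw [pow_two]; exact mul_le_mul_of_nonneg_right hk2 hk0.le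
    have e3 : L * k ≤ Real.log 2 * k := mul_le_mul_of_nonneg_right hLlog2 hk0.le
    have e4 : (L - 32 * y ^ 2) ^ 2 = L ^ 2 - 64 * (L * k) + 1024 * k ^ 2 := by
      rw [hy2]; ring
    have e5 : 0 ≤ L ^ 2 := sq_nonneg L
    have e6 : 0 ≤ k ^ 2 := sq_nonneg k
    have e7 : 0 < Real.log 2 * k := mul_pos hlog2pos hk0
    linarith
  set K : ℝ := Real.exp (-x0 ^ 2 / (2 * σ ^ 2)) with hKdef
  have hK0 : 0 < K := Real.exp_pos _
  have hKle : K ≤ 1 / (8 * n) := by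
    have h8n : Real.log (8 * n) = Real.log 8 + k := by
      rw [Real.log_mul (by norm_num) (by positivity)]
    have : K ≤ Real.exp (-Real.log (8 * n)) := by
      apply Real.exp_le_exp.mpr
      rw [h8n, neg_div]
      linarith
    rwa [Real.exp_neg, Real.exp_log (by positivity), inv_eq_one_div] at this

  -- the density pieces
  set f : ℝ → ℝ := fun x => max (gaussianPDFReal μx V x - (1 - εmax) * gaussianPDFReal 0 V x) 0
    with hfdef
  set g : ℝ → ℝ := fun x => max ((1 - εmax) * gaussianPDFReal 0 V x - gaussianPDFReal μx V x) 0
    with hgdef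
  have hf_meas : Measurable f :=
    ((measurable_gaussianPDFReal μx V).sub
      ((measurable_gaussianPDFReal 0 V).const_mul (1 - εmax))).max measurable_const
  have hg_meas : Measurable g :=
    (((measurable_gaussianPDFReal 0 V).const_mul (1 - εmax)).sub
      (measurable_gaussianPDFReal μx V)).max measurable_const
  have hf_nonneg : ∀ x, 0 ≤ f x := fun x => le_max_right _ _
  have hg_nonneg : ∀ x, 0 ≤ g x := fun x => le_max_right _ _
  have hf_le : ∀ x, f x ≤ gaussianPDFReal μx V x := by
    intro x
    apply max_le
    · have h0 : 0 ≤ (1 - εmax) * gaussianPDFReal 0 V x :=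
        mul_nonneg (by linarith) (gaussianPDFReal_nonneg _ _ _)
      linarith
    · exact gaussianPDFReal_nonneg _ _ _
  have hf_int : Integrable f := by
    refine Integrable.mono' (integrable_gaussianPDFReal μx V) hf_meas.aestronglyMeasurable
      (ae_of_all _ fun x => ?_)
    rw [Real.norm_of_nonneg (hf_nonneg x)]
    exact hf_le x
  have hcm : εmax ≤ ∫ x, f x := by
    have hsub : Integrable
        (fun x => gaussianPDFReal μx V x - (1 - εmax) * gaussianPDFReal 0 V x) :=
      (integrable_gaussianPDFReal μx V).sub ((integrable_gaussianPDFReal 0 V).const_mul _)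
    have h1 : ∫ x, (gaussianPDFReal μx V x - (1 - εmax) * gaussianPDFReal 0 V x) = εmax := by
      rw [integral_sub (integrable_gaussianPDFReal μx V)
        ((integrable_gaussianPDFReal 0 V).const_mul _), integral_const_mul,
        integral_gaussianPDFReal_eq_one μx hV0, integral_gaussianPDFReal_eq_one 0 hV0]
      ring
    rw [← h1]
    exact integral_mono hsub hf_int fun x => le_max_left _ _
  set cm : ℝ := ∫ x, f x with hcmdef
  have hcm0 : 0 < cm := lt_of_lt_of_le hεm0 hcm
  -- the contamination measure
  set Q : Measure ℝ := volume.withDensity (fun x => ENNReal.ofReal (f x / cm)) with hQdef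
  haveI hQprob : IsProbabilityMeasure Q := by
    constructor
    rw [hQdef, withDensity_apply _ MeasurableSet.univ, Measure.restrict_univ,
      ← ofReal_integral_eq_lintegral_ofReal (hf_int.div_const _)
        (ae_of_all _ fun x => div_nonneg (hf_nonneg x) hcm0.le),
      integral_div, ← hcmdef, div_self hcm0.ne', ENNReal.ofReal_one]
  -- coverage/length instantiations
  haveI hgauss_prob : IsProbabilityMeasure (gauss 0 (σ ^ 2)) := by unfold gauss; infer_instance
  haveI hgaussμ_prob : IsProbabilityMeasure (gauss μx (σ ^ 2)) := by unfold gauss; infer_instance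
  have hhub0 : huber μx σ 0 (gauss 0 (σ ^ 2)) = gauss μx (σ ^ 2) := by
    unfold huber; simp
  have hE1 : ENNReal.ofReal (1 - δ) ≤ iid n (gauss μx (σ ^ 2)) {x | l x ≤ μx ∧ μx ≤ u x} := by
    have h := (hcov μx 0 ⟨le_refl 0, hεm0.le⟩ (gauss 0 (σ ^ 2)) hgauss_prob).1
    rwa [hhub0] at h
  have hconv : Measure.conv (Measure.dirac μx) (gauss 0 (σ ^ 2)) = gauss μx (σ ^ 2) := by
    unfold gauss
    exact dirac_conv_gaussianReal μx _
  have hefron : efron μx σ ε (Measure.dirac μx) = gauss μx (σ ^ 2) := by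
    unfold efron
    rw [hconv, ← add_smul, ← ENNReal.ofReal_add (by linarith [hε.2] : (0:ℝ) ≤ 1 - ε) hε.1,
      sub_add_cancel, ENNReal.ofReal_one, one_smul]
  have hE2 : ENNReal.ofReal (1 - δ) ≤ iid n (gauss μx (σ ^ 2)) {x | u x - l x ≤ r ε} := by
    have h := (hcov μx ε hε (Measure.dirac μx) (by infer_instance)).2
    rwa [hefron] at h
  have hE3' : ENNReal.ofReal (1 - δ) ≤ iid n (huber 0 σ εmax Q) {x | l x ≤ 0 ∧ 0 ≤ u x} :=
    (hcov 0 εmax ⟨hεm0.le, le_refl εmax⟩ Q hQprob).1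
  set S1 : Set (Fin n → ℝ) := {x | l x ≤ μx ∧ μx ≤ u x} with hS1def
  set S2 : Set (Fin n → ℝ) := {x | u x - l x ≤ r ε} with hS2def
  set S3 : Set (Fin n → ℝ) := {x | l x ≤ 0 ∧ 0 ≤ u x} with hS3def
  -- density representations
  set pdfμ : ℝ → ℝ≥0∞ := gaussianPDF μx V with hpdfμdef
  have hpdfμ_meas : Measurable pdfμ := measurable_gaussianPDF μx V
  set pg : ℝ → ℝ≥0∞ := fun x => ENNReal.ofReal (g x) with hpgdef
  have hpg_meas : Measurable pg := hg_meas.ennreal_ofReal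
  set dM : ℝ → ℝ≥0∞ :=
    fun x => ENNReal.ofReal ((1 - εmax) * gaussianPDFReal 0 V x + εmax * (f x / cm)) with hdMdef
  have hdM_meas : Measurable dM :=
    (((measurable_gaussianPDFReal 0 V).const_mul _).add
      ((hf_meas.div_const _).const_mul _)).ennreal_ofReal
  have hgauss0rep : gauss 0 (σ ^ 2) = volume.withDensity (gaussianPDF 0 V) := by
    unfold gauss
    rw [← hVdef]
    exact gaussianReal_of_var_ne_zero 0 hV0
  have hM : huber 0 σ εmax Q = volume.withDensity dM := by
    unfold huber
    rw [hgauss0rep, hQdef,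
      ← withDensity_smul _ (measurable_gaussianPDF 0 V),
      ← withDensity_smul _ (hf_meas.div_const _).ennreal_ofReal,
      ← withDensity_add_left ((measurable_gaussianPDF 0 V).const_smul _)]
    congr 1
    funext x
    simp only [Pi.add_apply, Pi.smul_apply, smul_eq_mul, gaussianPDF]
    simp only [hdMdef]
    rw [ENNReal.ofReal_add
        (mul_nonneg (by linarith : (0:ℝ) ≤ 1 - εmax) (gaussianPDFReal_nonneg 0 V x))
        (mul_nonneg hεm0.le (div_nonneg (hf_nonneg x) hcm0.le)),
      ENNReal.ofReal_mul (by linarith : (0:ℝ) ≤ 1 - εmax), ENNReal.ofReal_mul hεm0.le]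
  have hMuniv : huber 0 σ εmax Q Set.univ = 1 := by
    unfold huber
    simp only [Measure.coe_add, Pi.add_apply, Measure.smul_apply, smul_eq_mul]
    rw [measure_univ, measure_univ, mul_one, mul_one,
      ← ENNReal.ofReal_add (by linarith) hεm0.le, sub_add_cancel, ENNReal.ofReal_one]
  haveI hMprob : IsProbabilityMeasure (huber 0 σ εmax Q) := ⟨hMuniv⟩
  haveI hdMprob : IsProbabilityMeasure (volume.withDensity dM) := hM ▸ hMprob
  haveI hpdfμprob : IsProbabilityMeasure (volume.withDensity pdfμ) := by
    rw [hpdfμdef, ← gaussianReal_of_var_ne_zero μx hV0]; infer_instance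
  have hMrep : iid n (huber 0 σ εmax Q)
      = (Measure.pi fun _ : Fin n => (volume : Measure ℝ)).withDensity
          (fun x => ∏ i, dM (x i)) := by
    unfold iid
    rw [hM]
    exact pi_withDensity' volume (fun _ => dM) (fun _ => hdM_meas)
  have hρrep : iid n (gauss μx (σ ^ 2))
      = (Measure.pi fun _ : Fin n => (volume : Measure ℝ)).withDensity
          (fun x => ∏ i, pdfμ (x i)) := by
    unfold iid gauss
    rw [← hVdef, gaussianReal_of_var_ne_zero μx hV0, ← hpdfμdef]
    exact pi_withDensity' volume (fun _ => pdfμ) (fun _ => hpdfμ_meas)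
  -- pointwise domination of the contaminated density
  have hdM_le : ∀ x : ℝ, dM x ≤ pdfμ x + pg x := by
    intro x
    have h1 : εmax * (f x / cm) ≤ f x := by
      have h2 : εmax / cm ≤ 1 := (div_le_one hcm0).mpr hcm
      calc εmax * (f x / cm) = (εmax / cm) * f x := by ring
        _ ≤ 1 * f x := mul_le_mul_of_nonneg_right h2 (hf_nonneg x)
        _ = f x := one_mul _
    have hfx : f x = max (gaussianPDFReal μx V x - (1 - εmax) * gaussianPDFReal 0 V x) 0 := rfl
    have hgx : g x = max ((1 - εmax) * gaussianPDFReal 0 V x - gaussianPDFReal μx V x) 0 := rfl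
    have h3 : (1 - εmax) * gaussianPDFReal 0 V x + f x = gaussianPDFReal μx V x + g x := by
      rw [hfx, hgx]; exact max_add_max _ _
    have h4 : (1 - εmax) * gaussianPDFReal 0 V x + εmax * (f x / cm)
        ≤ gaussianPDFReal μx V x + g x := by linarith
    calc dM x ≤ ENNReal.ofReal (gaussianPDFReal μx V x + g x) := ENNReal.ofReal_le_ofReal h4
      _ = ENNReal.ofReal (gaussianPDFReal μx V x) + ENNReal.ofReal (g x) :=
          ENNReal.ofReal_add (gaussianPDFReal_nonneg _ _ _) (hg_nonneg x)
      _ = pdfμ x + pg x := rfl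
  -- the small total mass of g
  have hg_dom : ∀ x, g x ≤ K * gaussianPDFReal x0 V x := by
    intro x
    have h := gauss_tail_dom hVpos hεm0.le hεm1 hμx0 hx0neg (by rw [hVc]; exact h2x0) x
    rw [hVc] at h
    exact h
  have hMg_le : ∫⁻ x, pg x ≤ ENNReal.ofReal K := by
    calc ∫⁻ x, pg x ≤ ∫⁻ x, ENNReal.ofReal (K * gaussianPDFReal x0 V x) :=
        lintegral_mono fun x => ENNReal.ofReal_le_ofReal (hg_dom x)
      _ = ∫⁻ x, ENNReal.ofReal K * gaussianPDF x0 V x := by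
          congr 1; funext x; rw [ENNReal.ofReal_mul hK0.le]; rfl
      _ = ENNReal.ofReal K * ∫⁻ x, gaussianPDF x0 V x :=
          lintegral_const_mul _ (measurable_gaussianPDF x0 V)
      _ = ENNReal.ofReal K := by rw [lintegral_gaussianPDF_eq_one x0 hV0, mul_one]
  -- events
  have mE1 : MeasurableSet S1 :=
    (measurableSet_le hl measurable_const).inter (measurableSet_le measurable_const hu)
  have mE2 : MeasurableSet S2 :=
    measurableSet_le (hu.sub hl) measurable_const
  have mE3 : MeasurableSet S3 :=
    (measurableSet_le hl measurable_const).inter (measurableSet_le measurable_const hu)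
  -- product densities
  set lam : Measure (Fin n → ℝ) := Measure.pi fun _ : Fin n => (volume : Measure ℝ) with hlamdef
  set P : (Fin n → ℝ) → ℝ≥0∞ := fun x => ∏ i, pdfμ (x i) with hPdef
  set Ψ : (Fin n → ℝ) → ℝ≥0∞ := fun x => ∏ i, (pdfμ (x i) + pg (x i)) with hΨdef
  have hP_meas : Measurable P :=
    Finset.measurable_prod _ fun i _ => hpdfμ_meas.comp (measurable_pi_apply i)
  have hPΨ : ∀ x, P x ≤ Ψ x := fun x => Finset.prod_le_prod' fun i _ => le_self_add
  have hdMP : ∀ x : Fin n → ℝ, (∏ i, dM (x i)) ≤ Ψ x := fun x =>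
    Finset.prod_le_prod' fun i _ => hdM_le (x i)
  set D : ℝ≥0∞ := ∫⁻ x, (Ψ x - P x) ∂lam with hDdef
  have hPint : ∫⁻ x, P x ∂lam = 1 := by
    rw [hPdef, hlamdef, lintegral_pi_prod' volume _ (fun i => hpdfμ_meas)]
    rw [hpdfμdef]
    simp [lintegral_gaussianPDF_eq_one μx hV0]
  have hΨint : ∫⁻ x, Ψ x ∂lam = (1 + ∫⁻ x, pg x) ^ n := by
    rw [hΨdef, hlamdef, lintegral_pi_prod' volume (fun _ => fun x => pdfμ x + pg x) (fun i => hpdfμ_meas.add hpg_meas)]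
    have h1 : ∫⁻ x, (pdfμ x + pg x) = 1 + ∫⁻ x, pg x := by
      rw [lintegral_add_left hpdfμ_meas, hpdfμdef, lintegral_gaussianPDF_eq_one μx hV0]
    rw [h1, Finset.prod_const, Finset.card_univ, Fintype.card_fin]
  have hsplit : ∀ ν : Measure (Fin n → ℝ),
      ∫⁻ x, Ψ x ∂ν = ∫⁻ x, P x ∂ν + ∫⁻ x, (Ψ x - P x) ∂ν := by
    intro ν
    rw [← lintegral_add_left hP_meas]
    congr 1
    funext x
    exact (add_tsub_cancel_of_le (hPΨ x)).symm
  -- bound on D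
  have hDle : D ≤ ENNReal.ofReal (1 / 7) := by
    have h1 : 1 + D = (1 + ∫⁻ x, pg x) ^ n := by
      rw [← hΨint, hsplit lam, hPint, ← hDdef]
    have h2 : (1 + ∫⁻ x, pg x) ^ n ≤ (1 + ENNReal.ofReal K) ^ n := by
      gcongr
    have h3 : ((1 : ℝ≥0∞) + ENNReal.ofReal K) ^ n = ENNReal.ofReal ((1 + K) ^ n) := by
      rw [← ENNReal.ofReal_one, ← ENNReal.ofReal_add zero_le_one hK0.le,
        ← ENNReal.ofReal_pow (by linarith)]
    have hKn : (n : ℝ) * K ≤ 1 / 8 := by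
      calc (n : ℝ) * K ≤ (n : ℝ) * (1 / (8 * n)) := mul_le_mul_of_nonneg_left hKle hn0.le
        _ = 1 / 8 := by field_simp <;> ring
    have hpow : (1 + K) ^ n ≤ 8 / 7 := by
      have hstep : Real.exp (1/8 : ℝ) ≤ 8 / 7 := by
        have h78 : (7:ℝ)/8 ≤ Real.exp (-(1/8)) := by
          linarith [Real.add_one_le_exp (-(1/8) : ℝ)]
        have hpos : (0:ℝ) < 7/8 := by norm_num
        have hinv := inv_anti₀ hpos h78
        rw [Real.exp_neg, inv_inv] at hinv
        calc Real.exp (1/8 : ℝ) ≤ ((7:ℝ)/8)⁻¹ := hinv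
          _ = 8 / 7 := by norm_num
      calc (1 + K) ^ n ≤ Real.exp K ^ n :=
          pow_le_pow_left₀ (by linarith) (by linarith [Real.add_one_le_exp K]) n
        _ = Real.exp ((n : ℝ) * K) := by rw [← Real.exp_nat_mul]
        _ ≤ Real.exp (1 / 8) := Real.exp_le_exp.mpr hKn
        _ ≤ 8 / 7 := hstep
    have h4 : ENNReal.ofReal ((1 + K) ^ n) ≤ ENNReal.ofReal (8 / 7) :=
      ENNReal.ofReal_le_ofReal hpow
    have h5 : (ENNReal.ofReal (8 / 7 : ℝ)) = 1 + ENNReal.ofReal (1 / 7 : ℝ) := by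
      rw [← ENNReal.ofReal_one, ← ENNReal.ofReal_add zero_le_one (by norm_num)]
      norm_num
    have h6 : 1 + D ≤ 1 + ENNReal.ofReal (1 / 7) := by
      rw [h1]
      exact le_trans h2 (le_trans (le_of_eq h3) (le_trans h4 (le_of_eq h5)))
    exact (ENNReal.add_le_add_iff_left ENNReal.one_ne_top).mp h6
  -- transfer of the third event
  have hE3 : ENNReal.ofReal (1 - δ)
      ≤ iid n (gauss μx (σ ^ 2)) S3 + D := by
    calc ENNReal.ofReal (1 - δ)
        ≤ iid n (huber 0 σ εmax Q) S3 := hE3'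
      _ = ∫⁻ x in S3, (∏ i, dM (x i)) ∂lam := by
          rw [hMrep, withDensity_apply _ mE3]
      _ ≤ ∫⁻ x in S3, Ψ x ∂lam :=
          lintegral_mono fun x => hdMP x
      _ = ∫⁻ x in S3, P x ∂lam
          + ∫⁻ x in S3, (Ψ x - P x) ∂lam := hsplit _
      _ ≤ ∫⁻ x in S3, P x ∂lam + D := by
          refine add_le_add le_rfl ?_
          rw [hDdef]
          exact setLIntegral_le_lintegral _ _
      _ = iid n (gauss μx (σ ^ 2)) S3 + D := by
          rw [hρrep, withDensity_apply _ mE3]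
  -- final union bound
  haveI hρprob : IsProbabilityMeasure (iid n (gauss μx (σ ^ 2))) := by
    unfold iid; infer_instance
  have hofReal1 : ENNReal.ofReal δ + ENNReal.ofReal (1 - δ) = 1 := by
    rw [← ENNReal.ofReal_add hδ0.le (by linarith)]
    norm_num
  have hc1 : iid n (gauss μx (σ ^ 2)) S1ᶜ ≤ ENNReal.ofReal δ := by
    rw [prob_compl_eq_one_sub mE1]
    refine tsub_le_iff_right.mpr ?_
    calc (1:ℝ≥0∞) = ENNReal.ofReal δ + ENNReal.ofReal (1 - δ) := hofReal1.symm
      _ ≤ ENNReal.ofReal δ + iid n (gauss μx (σ ^ 2)) S1 :=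
          add_le_add le_rfl hE1
  have hc2 : iid n (gauss μx (σ ^ 2)) S2ᶜ ≤ ENNReal.ofReal δ := by
    rw [prob_compl_eq_one_sub mE2]
    refine tsub_le_iff_right.mpr ?_
    calc (1:ℝ≥0∞) = ENNReal.ofReal δ + ENNReal.ofReal (1 - δ) := hofReal1.symm
      _ ≤ ENNReal.ofReal δ + iid n (gauss μx (σ ^ 2)) S2 :=
          add_le_add le_rfl hE2
  have hc3 : iid n (gauss μx (σ ^ 2)) S3ᶜ ≤ ENNReal.ofReal δ + D := by
    rw [prob_compl_eq_one_sub mE3]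
    refine tsub_le_iff_right.mpr ?_
    calc (1:ℝ≥0∞) = ENNReal.ofReal δ + ENNReal.ofReal (1 - δ) := hofReal1.symm
      _ ≤ ENNReal.ofReal δ + (iid n (gauss μx (σ ^ 2)) S3 + D) :=
          add_le_add le_rfl hE3
      _ = ENNReal.ofReal δ + D + iid n (gauss μx (σ ^ 2)) S3 := by
          ring
  have htotal : iid n (gauss μx (σ ^ 2)) (S1ᶜ ∪ (S2ᶜ ∪ S3ᶜ)) < 1 := by
    have t1 : iid n (gauss μx (σ ^ 2)) (S1ᶜ ∪ (S2ᶜ ∪ S3ᶜ))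
        ≤ ENNReal.ofReal δ + (ENNReal.ofReal δ + (ENNReal.ofReal δ + D)) := by
      refine le_trans (measure_union_le _ _) ?_
      refine le_trans (add_le_add le_rfl (measure_union_le _ _)) ?_
      exact add_le_add hc1 (add_le_add hc2 hc3)
    have t2 : ENNReal.ofReal δ + (ENNReal.ofReal δ + (ENNReal.ofReal δ + D))
        ≤ ENNReal.ofReal δ + (ENNReal.ofReal δ + (ENNReal.ofReal δ + ENNReal.ofReal (1/7))) := by
      gcongr
    have t3 : ENNReal.ofReal δ + (ENNReal.ofReal δ + (ENNReal.ofReal δ + ENNReal.ofReal (1/7)))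
        = ENNReal.ofReal (δ + (δ + (δ + 1/7))) := by
      rw [← ENNReal.ofReal_add hδ0.le (by norm_num),
        ← ENNReal.ofReal_add hδ0.le (by linarith),
        ← ENNReal.ofReal_add hδ0.le (by linarith)]
    have t4 : ENNReal.ofReal (δ + (δ + (δ + 1/7))) < 1 := by
      rw [← ENNReal.ofReal_one]
      exact (ENNReal.ofReal_lt_ofReal_iff (by norm_num)).mpr (by linarith)
    exact lt_of_le_of_lt (le_trans t1 (le_trans t2 (le_of_eq t3))) t4
  have hne : S1ᶜ
      ∪ (S2ᶜ ∪ S3ᶜ) ≠ Set.univ := by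
    intro hcontra
    rw [hcontra, measure_univ] at htotal
    exact lt_irrefl _ htotal
  obtain ⟨x, hx⟩ := (Set.ne_univ_iff_exists_notMem _).mp hne
  simp only [Set.mem_union, Set.mem_compl_iff, Set.mem_setOf_eq, not_or, not_not] at hx
  obtain ⟨hx1, hx2, hx3⟩ := hx
  obtain ⟨h1a, h1b⟩ := hx1
  obtain ⟨h3a, h3b⟩ := hx3
  have hx2' : u x - l x ≤ r ε := hx2
  have hfinal : μx ≤ r ε := by linarith
  exact hfinal
end

section
/- Fix δ ∈ (0,1/4) and εmax ∈ (0,1/2). There exists a constant c > 0 depending only on δ and εmax such that the following holds for every integer n ≥ 1. Let (l,u) be any confidence-interval procedure on n samples and r : (0,∞) × [0,εmax] → (0,∞) any function such that for all θ ∈ ℝ, all σ > 0, all ε ∈ [0,εmax], and all probability measures Q on ℝ: (coverage over Huber's model) H_{θ,σ,ε,Q}^{⊗n}( {x : l(x) ≤ θ ≤ u(x)} ) ≥ 1 − δ, where H_{θ,σ,ε,Q} = (1−ε)·N(θ,σ²) + ε·Q; and (length over Efron's model) P_{θ,σ,ε,Q}^{⊗n}( {x : u(x) − l(x) ≤ r(σ,ε)}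 ) ≥ 1 − δ. Then r(σ,ε) ≥ c·σ for all σ > 0 and ε ∈ [0,εmax]. -/
open MeasureTheory ProbabilityTheory Real
open scoped ENNReal NNReal

lemma aux_exp_quad (v' d θ x : ℝ) (hv' : 0 < v') (hd : 0 < d) :
    x^2/(2*(v'+d)) - (x-θ)^2/(2*v') ≤ θ^2/(2*d) := by
  rw [sub_le_iff_le_add, div_add_div _ _ (by positivity) (by positivity),
    div_le_div_iff₀ (by positivity) (by positivity)]
  nlinarith [sq_nonneg (d*x - (v'+d)*θ), sq_nonneg x, sq_nonneg (x-θ), mul_pos hv' hd]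

lemma aux_pdf_le (εm σ θ : ℝ) (hε0 : 0 < εm) (hε1 : εm < 1) (hσ : 0 < σ)
    (hθ : θ^2 = εm * Real.log ((1 - εm/2)/(1 - εm)) / 2 * σ^2) (x : ℝ) :
    (1 - εm) * gaussianPDFReal θ (Real.toNNReal ((1 - εm/2)*σ^2)) x
      ≤ gaussianPDFReal 0 (Real.toNNReal (σ^2)) x := by
  have h1 : (0:ℝ) < 1 - εm := by linarith
  have h2 : (0:ℝ) < 1 - εm/2 := by linarith
  have hσ2 : (0:ℝ) < σ^2 := by positivity
  have hv' : (0:ℝ) < (1 - εm/2)*σ^2 := by positivity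
  set L := Real.log ((1 - εm/2)/(1 - εm)) with hLdef
  have hcoe1 : ((Real.toNNReal ((1 - εm/2)*σ^2)) : ℝ) = (1 - εm/2)*σ^2 :=
    Real.coe_toNNReal _ hv'.le
  have hcoe2 : ((Real.toNNReal (σ^2)) : ℝ) = σ^2 := Real.coe_toNNReal _ hσ2.le
  rw [gaussianPDFReal, gaussianPDFReal, hcoe1, hcoe2]
  -- exponent bound
  have hquad : -(x - θ)^2/(2*((1 - εm/2)*σ^2)) ≤ -(x - 0)^2/(2*σ^2) + L/2 := by
    have hd : (0:ℝ) < (εm/2)*σ^2 := by positivity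
    have h := aux_exp_quad ((1 - εm/2)*σ^2) ((εm/2)*σ^2) θ x hv' hd
    have hsum : (1 - εm/2)*σ^2 + (εm/2)*σ^2 = σ^2 := by ring
    rw [hsum] at h
    have hθd : θ^2/(2*((εm/2)*σ^2)) = L/2 := by
      rw [hθ]; field_simp
    rw [hθd] at h
    have : (x - 0)^2 = x^2 := by ring
    rw [this]
    have e1 : -(x - θ)^2/(2*((1 - εm/2)*σ^2)) = -((x - θ)^2/(2*((1 - εm/2)*σ^2))) := by ring
    have e2 : -x^2/(2*σ^2) = -(x^2/(2*σ^2)) := by ring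
    rw [e1, e2]; linarith
  have hexp : rexp (-(x - θ)^2/(2*((1 - εm/2)*σ^2)))
      ≤ rexp (-(x - 0)^2/(2*σ^2)) * rexp (L/2) := by
    rw [← Real.exp_add]; exact Real.exp_le_exp.mpr hquad
  -- constant bound : (1-εm) * (√(2π v'))⁻¹ * exp(L/2) ≤ (√(2π v))⁻¹
  have hexpL : rexp (L/2) = Real.sqrt ((1 - εm/2)/(1 - εm)) := by
    rw [Real.exp_half, Real.exp_log (by positivity)]
  have hsplit : Real.sqrt (2*π*((1 - εm/2)*σ^2))
      = Real.sqrt (2*π*σ^2) * Real.sqrt (1 - εm/2) := by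
    rw [← Real.sqrt_mul (by positivity)]; ring_nf
  have hsq2 : Real.sqrt ((1 - εm/2)/(1 - εm))
      = Real.sqrt (1 - εm/2) / Real.sqrt (1 - εm) := Real.sqrt_div h2.le _
  have hs1 : (0:ℝ) < Real.sqrt (2*π*σ^2) := Real.sqrt_pos.mpr (by positivity)
  have hs2 : (0:ℝ) < Real.sqrt (1 - εm/2) := Real.sqrt_pos.mpr h2
  have hs3 : (0:ℝ) < Real.sqrt (1 - εm) := Real.sqrt_pos.mpr h1
  have hconst : (1 - εm) * (Real.sqrt (2*π*((1 - εm/2)*σ^2)))⁻¹ * rexp (L/2)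
      ≤ (Real.sqrt (2*π*σ^2))⁻¹ := by
    rw [hexpL, hsplit, hsq2]
    have hle1 : Real.sqrt (1 - εm) ≤ 1 := Real.sqrt_le_one.mpr (by linarith)
    set a := Real.sqrt (2*π*σ^2) with ha
    set b := Real.sqrt (1 - εm/2) with hb
    set cg := Real.sqrt (1 - εm) with hcg
    have hcg2 : cg^2 = 1 - εm := Real.sq_sqrt h1.le
    have key : (1 - εm) * (a * b)⁻¹ * (b / cg) = cg / a := by
      rw [← hcg2]; field_simp
    rw [key]
    have h1a : cg / a ≤ 1 / a := by gcongr
    simpa [one_div] using h1a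
  -- combine
  have hea : (0:ℝ) < rexp (-(x - 0)^2/(2*σ^2)) := Real.exp_pos _
  calc (1 - εm) * ((Real.sqrt (2*π*((1 - εm/2)*σ^2)))⁻¹ *
          rexp (-(x - θ)^2/(2*((1 - εm/2)*σ^2))))
      ≤ (1 - εm) * ((Real.sqrt (2*π*((1 - εm/2)*σ^2)))⁻¹ *
          (rexp (-(x - 0)^2/(2*σ^2)) * rexp (L/2))) := by
        apply mul_le_mul_of_nonneg_left _ h1.le
        apply mul_le_mul_of_nonneg_left hexp (by positivity)
    _ = ((1 - εm) * (Real.sqrt (2*π*((1 - εm/2)*σ^2)))⁻¹ * rexp (L/2)) *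
          rexp (-(x - 0)^2/(2*σ^2)) := by ring
    _ ≤ (Real.sqrt (2*π*σ^2))⁻¹ * rexp (-(x - 0)^2/(2*σ^2)) :=
        mul_le_mul_of_nonneg_right hconst hea.le

lemma huber_decomp (εm σ θ : ℝ) (hε0 : 0 < εm) (hε1 : εm < 1) (hσ : 0 < σ)
    (hθ : θ^2 = εm * Real.log ((1 - εm/2)/(1 - εm)) / 2 * σ^2) :
    ∃ Q : Measure ℝ, IsProbabilityMeasure Q ∧
      huber θ (σ * Real.sqrt (1 - εm/2)) εm Q = gauss 0 (σ^2) := by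
  have h2 : (0:ℝ) < 1 - εm/2 := by linarith
  have hσ'2 : (σ * Real.sqrt (1 - εm/2))^2 = (1 - εm/2) * σ^2 := by
    rw [mul_pow, Real.sq_sqrt h2.le]; ring
  set v : ℝ≥0 := Real.toNNReal (σ^2) with hv
  set v' : ℝ≥0 := Real.toNNReal ((1 - εm/2)*σ^2) with hv'
  have hvne : v ≠ 0 := by
    simp [hv, Real.toNNReal_eq_zero, not_le]; positivity
  have hv'ne : v' ≠ 0 := by
    simp [hv', Real.toNNReal_eq_zero, not_le]; positivity
  set g : ℝ → ℝ := fun x => εm⁻¹ *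
    (gaussianPDFReal 0 v x - (1 - εm) * gaussianPDFReal θ v' x) with hg
  have hg0 : ∀ x, 0 ≤ g x := by
    intro x
    have := aux_pdf_le εm σ θ hε0 hε1 hσ hθ x
    have h := sub_nonneg.mpr this
    exact mul_nonneg (by positivity) h
  have hmg : Measurable fun x => ENNReal.ofReal (g x) := by
    apply ENNReal.measurable_ofReal.comp
    exact (measurable_const.mul
      ((measurable_gaussianPDFReal 0 v).sub
        (measurable_const.mul (measurable_gaussianPDFReal θ v'))))
  set Q : Measure ℝ := volume.withDensity (fun x => ENNReal.ofReal (g x)) with hQ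
  have heq : huber θ (σ * Real.sqrt (1 - εm/2)) εm Q = gauss 0 (σ^2) := by
    unfold huber gauss
    rw [hσ'2]
    rw [gaussianReal_of_var_ne_zero _ hv'ne, gaussianReal_of_var_ne_zero _ hvne]
    rw [hQ]
    rw [← withDensity_smul _ (measurable_gaussianPDF θ v'),
        ← withDensity_smul _ hmg,
        ← withDensity_add_left (by measurability) ]
    congr 1
    funext x
    have hpdf' : 0 ≤ gaussianPDFReal θ v' x := gaussianPDFReal_nonneg θ v' x
    simp only [Pi.add_apply, Pi.smul_apply, smul_eq_mul, gaussianPDF]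
    rw [← ENNReal.ofReal_mul (by linarith), ← ENNReal.ofReal_mul hε0.le,
        ← ENNReal.ofReal_add (mul_nonneg (by linarith) hpdf') (mul_nonneg hε0.le (hg0 x))]
    congr 1
    simp only [hg]
    field_simp
    ring
  have hGprob : IsProbabilityMeasure (gaussianReal 0 v) := by infer_instance
  have hQprob : IsProbabilityMeasure Q := by
    constructor
    have huniv : huber θ (σ * Real.sqrt (1 - εm/2)) εm Q Set.univ = 1 := by
      rw [heq]; unfold gauss; exact hGprob.measure_univ
    unfold huber at huniv
    have hG'prob : IsProbabilityMeasure (gauss θ ((σ * Real.sqrt (1 - εm/2))^2)) := by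
      unfold gauss; infer_instance
    rw [Measure.add_apply, Measure.smul_apply, Measure.smul_apply,
        hG'prob.measure_univ, smul_eq_mul, smul_eq_mul, mul_one] at huniv
    have hone : ENNReal.ofReal (1 - εm) + ENNReal.ofReal εm = 1 := by
      rw [← ENNReal.ofReal_add (by linarith) hε0.le]
      norm_num
    have : ENNReal.ofReal (1 - εm) + ENNReal.ofReal εm * Q Set.univ
        = ENNReal.ofReal (1 - εm) + ENNReal.ofReal εm * 1 := by
      rw [mul_one, hone, huniv]
    have h' := (ENNReal.add_right_inj (by exact ENNReal.ofReal_ne_top)).mp this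
    exact (ENNReal.mul_right_inj (by simpa using hε0) ENNReal.ofReal_ne_top).mp h'
  exact ⟨Q, hQprob, heq⟩

lemma efron_dirac (σ ε : ℝ) (hε0 : 0 ≤ ε) (hε1 : ε ≤ 1) :
    efron 0 σ ε (Measure.dirac 0) = gauss 0 (σ^2) := by
  unfold efron
  haveI : IsProbabilityMeasure (gauss 0 (σ^2)) := by unfold gauss; infer_instance
  have hconv : Measure.conv (Measure.dirac 0) (gauss 0 (σ^2)) = gauss 0 (σ^2) := by
    simp
  rw [hconv, ← add_smul, ← ENNReal.ofReal_add (by linarith) hε0]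
  norm_num

/-- No adaptation between Huber's and Efron's models, unknown variance (Theorem 6.1, part 2):
any procedure with variance-adaptive coverage over all Huber's models and length `r(σ,ε)`
over all Efron's models must satisfy `r(σ,ε) ≥ c·σ`. -/
theorem no_adaptation_unknown_variance (δ εmax : ℝ)
    (hδ : δ ∈ Set.Ioo (0:ℝ) (1/4)) (hεm : εmax ∈ Set.Ioo (0:ℝ) (1/2)) :
    ∃ c : ℝ, 0 < c ∧
      ∀ n : ℕ, 1 ≤ n →
        ∀ l u : (Fin n → ℝ) → ℝ, Measurable l → Measurable u → (∀ x, l x ≤ u x) →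
          ∀ r : ℝ → ℝ → ℝ,
            (∀ σ : ℝ, 0 < σ → ∀ ε ∈ Set.Icc (0:ℝ) εmax, 0 < r σ ε) →
            (∀ (θ σ ε : ℝ), 0 < σ → ε ∈ Set.Icc 0 εmax →
              ∀ Q : Measure ℝ, IsProbabilityMeasure Q →
                ENNReal.ofReal (1 - δ) ≤
                    iid n (huber θ σ ε Q) {x | l x ≤ θ ∧ θ ≤ u x} ∧
                ENNReal.ofReal (1 - δ) ≤
                    iid n (efron θ σ ε Q) {x | u x - l x ≤ r σ ε}) →
            ∀ σ : ℝ, 0 < σ → ∀ ε ∈ Set.Icc (0:ℝ) εmax,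
              c * σ ≤ r σ ε := by
  obtain ⟨hδ0, hδ1⟩ := hδ
  obtain ⟨hεm0, hεm1⟩ := hεm
  have h1εm : (0:ℝ) < 1 - εmax := by linarith
  have h2εm : (0:ℝ) < 1 - εmax/2 := by linarith
  set L : ℝ := Real.log ((1 - εmax/2)/(1 - εmax)) with hLdef
  have hL : 0 < L := Real.log_pos (by rw [lt_div_iff₀ h1εm]; linarith)
  set c : ℝ := Real.sqrt (εmax * L / 2) with hcdef
  have hc : 0 < c := Real.sqrt_pos.mpr (by positivity)
  have hc2 : c^2 = εmax * L / 2 := Real.sq_sqrt (by positivity)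
  refine ⟨c, hc, ?_⟩
  intro n hn l u hl hu hlu r hr hyp σ hσ ε hε
  have hεm1' : εmax < 1 := by linarith
  -- Huber decompositions at ±cσ
  have hθp : (c*σ)^2 = εmax * L / 2 * σ^2 := by rw [mul_pow, hc2]
  have hθm : (-(c*σ))^2 = εmax * L / 2 * σ^2 := by rw [neg_pow, ← hθp]; ring
  obtain ⟨Qp, hQpP, hQp⟩ := huber_decomp εmax σ (c*σ) hεm0 hεm1' hσ hθp
  obtain ⟨Qm, hQmP, hQm⟩ := huber_decomp εmax σ (-(c*σ)) hεm0 hεm1' hσ hθm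
  have hσ' : 0 < σ * Real.sqrt (1 - εmax/2) :=
    mul_pos hσ (Real.sqrt_pos.mpr h2εm)
  have hεmIcc : εmax ∈ Set.Icc (0:ℝ) εmax := ⟨hεm0.le, le_refl _⟩
  have h1 := (hyp (c*σ) (σ * Real.sqrt (1 - εmax/2)) εmax hσ' hεmIcc Qp hQpP).1
  have h2 := (hyp (-(c*σ)) (σ * Real.sqrt (1 - εmax/2)) εmax hσ' hεmIcc Qm hQmP).1
  have h3 := (hyp 0 σ ε hσ hε (Measure.dirac 0) (by infer_instance)).2
  rw [hQp] at h1
  rw [hQm] at h2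
  rw [efron_dirac σ ε hε.1 (by linarith [hε.2])] at h3
  set P : Measure (Fin n → ℝ) := iid n (gauss 0 (σ^2)) with hPdef
  haveI hPprob : IsProbabilityMeasure P := by
    rw [hPdef]; unfold iid gauss; infer_instance
  set A : Set (Fin n → ℝ) := {x | l x ≤ c*σ ∧ c*σ ≤ u x} with hA
  set B : Set (Fin n → ℝ) := {x | l x ≤ -(c*σ) ∧ -(c*σ) ≤ u x} with hB
  set C : Set (Fin n → ℝ) := {x | u x - l x ≤ r σ ε} with hC
  have mA : MeasurableSet A := by
    rw [hA, Set.setOf_and]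
    exact (measurableSet_le hl measurable_const).inter
      (measurableSet_le measurable_const hu)
  have mB : MeasurableSet B := by
    rw [hB, Set.setOf_and]
    exact (measurableSet_le hl measurable_const).inter
      (measurableSet_le measurable_const hu)
  have mC : MeasurableSet C := measurableSet_le (hu.sub hl) measurable_const
  have key : ∀ (S : Set (Fin n → ℝ)), MeasurableSet S →
      ENNReal.ofReal (1 - δ) ≤ P S → P Sᶜ ≤ ENNReal.ofReal δ := by
    intro S mS hS
    rw [prob_compl_eq_one_sub mS]
    calc 1 - P S ≤ 1 - ENNReal.ofReal (1 - δ) := tsub_le_tsub_left hS 1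
      _ = ENNReal.ofReal 1 - ENNReal.ofReal (1 - δ) := by rw [ENNReal.ofReal_one]
      _ = ENNReal.ofReal (1 - (1 - δ)) := (ENNReal.ofReal_sub 1 (by linarith)).symm
      _ = ENNReal.ofReal δ := by norm_num
  have hAc := key A mA h1
  have hBc := key B mB h2
  have hCc := key C mC h3
  have hunion : P (Aᶜ ∪ Bᶜ ∪ Cᶜ) < 1 := by
    calc P (Aᶜ ∪ Bᶜ ∪ Cᶜ) ≤ P (Aᶜ ∪ Bᶜ) + P Cᶜ := measure_union_le _ _
      _ ≤ P Aᶜ + P Bᶜ + P Cᶜ := by gcongr; exact measure_union_le _ _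
      _ ≤ ENNReal.ofReal δ + ENNReal.ofReal δ + ENNReal.ofReal δ := by gcongr
      _ = ENNReal.ofReal (δ + δ + δ) := by
          rw [ENNReal.ofReal_add (by linarith) hδ0.le,
              ENNReal.ofReal_add (by linarith) hδ0.le]
      _ < 1 := ENNReal.ofReal_lt_one.mpr (by linarith)
  have hne : (Aᶜ ∪ Bᶜ ∪ Cᶜ) ≠ Set.univ := by
    intro hcontra
    rw [hcontra, measure_univ] at hunion
    exact lt_irrefl _ hunion
  obtain ⟨x, hx⟩ : ∃ x, x ∉ (Aᶜ ∪ Bᶜ ∪ Cᶜ) := by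
    by_contra hcon
    push_neg at hcon
    exact hne (Set.eq_univ_iff_forall.mpr hcon)
  simp only [Set.mem_union, not_or, Set.mem_compl_iff, not_not] at hx
  obtain ⟨⟨hxA, hxB⟩, hxC⟩ := hx
  rw [hA, Set.mem_setOf_eq] at hxA
  rw [hB, Set.mem_setOf_eq] at hxB
  rw [hC, Set.mem_setOf_eq] at hxC
  have hcσ : 0 < c * σ := mul_pos hc hσ
  linarith [hxA.2, hxB.1, hxC]
end

section
/- Let θ ∈ ℝ, σ > 0, ε ∈ [0,1/2), and let Q be a probability measure on ℝ. Let φ be the characteristic function of the Efron measure P_{θ,σ,ε,Q}, and for μ ∈ ℝ define Υ(t;μ) = 2·e^{−iμt + σ²t²/2}·φ(t) − 1 for t ∈ ℝ. Then μ = θ if and only if there exists a probability measure ν on ℝ whose characteristic function equals t ↦ Υ(t;μ). -/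
open MeasureTheory ProbabilityTheory Real
open scoped ENNReal NNReal

/-- Characteristic function of a measure on `ℝ`: `φ(t) = ∫ e^{itx} dP(x)`. -/
noncomputable def charFun' (P : Measure ℝ) (t : ℝ) : ℂ :=
  ∫ x, Complex.exp (Complex.I * t * x) ∂P

/-- Certified adversarial component (known variance):
`Υ(t;μ) = 2·e^{−iμt + σ²t²/2}·φ(t) − 1`. -/
noncomputable def UpsKnown (σ : ℝ) (φ : ℝ → ℂ) (t μ : ℝ) : ℂ :=
  2 * Complex.exp (-(Complex.I * (μ : ℂ) * (t : ℂ)) + ((σ : ℂ) ^ 2 * (t : ℂ) ^ 2 / 2))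
      * φ t - 1

instance gauss_prob (m v : ℝ) : IsProbabilityMeasure (gauss m v) := by
  unfold gauss; infer_instance

lemma abs_e (t x : ℝ) : ‖Complex.exp (Complex.I * t * x)‖ = 1 := by
  rw [Complex.norm_exp]; simp

lemma cont_e (t : ℝ) : Continuous fun x : ℝ => Complex.exp (Complex.I * t * x) :=
  Complex.continuous_exp.comp (by continuity)

lemma integ_e (P : Measure ℝ) [IsFiniteMeasure P] (t : ℝ) :
    Integrable (fun x : ℝ => Complex.exp (Complex.I * t * x)) P := by
  refine (integrable_const (1:ℝ)).mono' (cont_e t).aestronglyMeasurable ?_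
  filter_upwards with x
  simp [abs_e]

lemma norm_charFun'_le (P : Measure ℝ) [IsProbabilityMeasure P] (t : ℝ) :
    ‖charFun' P t‖ ≤ 1 := by
  calc ‖charFun' P t‖ ≤ ∫ x, ‖Complex.exp (Complex.I * t * x)‖ ∂P :=
        norm_integral_le_integral_norm _
    _ = 1 := by simp [abs_e]

lemma charFun'_map_add (P : Measure ℝ) [IsFiniteMeasure P] (c t : ℝ) :
    charFun' (Measure.map (· + c) P) t
      = Complex.exp (Complex.I * t * c) * charFun' P t := by
  rw [charFun', integral_map (by fun_prop) (cont_e t).aestronglyMeasurable]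
  simp_rw [charFun', ← integral_const_mul]
  congr 1; ext x
  rw [← Complex.exp_add]
  push_cast
  ring_nf

lemma charFun'_gauss0 {v : ℝ≥0} (hv : v ≠ 0) (t : ℝ) :
    charFun' (gaussianReal 0 v) t = Complex.exp (-(((v:ℝ)):ℂ) * (t:ℂ)^2 / 2) := by
  have hv' : (0:ℝ) < (v:ℝ) := by positivity
  have hvC : ((v:ℝ):ℂ) ≠ 0 := by exact_mod_cast hv'.ne'
  have hs : (0:ℝ) < √(2 * π * v) := Real.sqrt_pos.2 (by positivity)
  rw [charFun', gaussianReal_of_var_ne_zero 0 hv]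
  rw [show gaussianPDF 0 v = fun x => ((Real.toNNReal (gaussianPDFReal 0 v x) : ℝ≥0) : ℝ≥0∞)
      from rfl,
    integral_withDensity_eq_integral_smul (by
      exact (measurable_gaussianPDFReal 0 v).real_toNNReal) _]
  have key : ∀ x : ℝ, (Real.toNNReal (gaussianPDFReal 0 v x) : ℝ≥0)
        • Complex.exp (Complex.I * t * x)
      = (((√(2 * π * v))⁻¹ : ℝ) : ℂ) *
        Complex.exp ((-(1/(2*((v:ℝ):ℂ)))) * (x:ℂ)^2 + (Complex.I * t) * x + 0) := by
    intro x
    rw [NNReal.smul_def, Real.coe_toNNReal _ (gaussianPDFReal_nonneg 0 v x)]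
    rw [gaussianPDFReal]
    simp only [Complex.real_smul]
    push_cast
    rw [mul_assoc]
    congr 1
    rw [← Complex.exp_add]
    congr 1
    ring
  simp_rw [key]
  rw [integral_const_mul, integral_cexp_quadratic (by
      rw [show -(1/(2*((v:ℝ):ℂ))) = (((-(1/(2*(v:ℝ)))) : ℝ) : ℂ) by push_cast; ring,
        Complex.ofReal_re]
      have : (0:ℝ) < 1/(2*(v:ℝ)) := by positivity
      linarith)]
  rw [show ((π:ℂ) / -(-(1/(2*((v:ℝ):ℂ))))) = (((2 * π * v : ℝ)):ℂ) by push_cast; field_simp]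
  rw [show ((1:ℂ)/2) = ((1/2:ℝ):ℂ) by norm_num, ← Complex.ofReal_cpow (by positivity),
    ← Real.sqrt_eq_rpow]
  rw [← mul_assoc, ← Complex.ofReal_mul, inv_mul_cancel₀ hs.ne', Complex.ofReal_one, one_mul]
  congr 1
  have hI : (Complex.I * (t:ℂ))^2 = -((t:ℂ)^2) := by rw [mul_pow, Complex.I_sq]; ring
  rw [hI]
  field_simp
  ring

lemma charFun'_gauss (m : ℝ) {v : ℝ} (hv : 0 < v) (t : ℝ) :
    charFun' (gauss m v) t
      = Complex.exp (Complex.I * t * m) * Complex.exp (-((v:ℝ):ℂ) * (t:ℂ)^2 / 2) := by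
  have h1 : gauss m v = Measure.map (· + m) (gaussianReal 0 (Real.toNNReal v)) := by
    rw [gaussianReal_map_add_const, zero_add]; rfl
  have hv0 : Real.toNNReal v ≠ 0 := by
    simp [Real.toNNReal_eq_zero, not_le, hv]
  rw [h1, charFun'_map_add, charFun'_gauss0 hv0,
    show ((Real.toNNReal v : ℝ) : ℂ) = ((v:ℝ):ℂ) by
      rw [Real.coe_toNNReal _ hv.le]]

lemma charFun'_conv (P R : Measure ℝ) [IsProbabilityMeasure P] [IsProbabilityMeasure R]
    (t : ℝ) : charFun' (Measure.conv P R) t = charFun' P t * charFun' R t := by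
  rw [charFun', Measure.conv, integral_map (by fun_prop) (cont_e t).aestronglyMeasurable]
  calc ∫ p : ℝ × ℝ, Complex.exp (Complex.I * t * ((p.1 + p.2 : ℝ) : ℂ)) ∂(P.prod R)
      = ∫ p : ℝ × ℝ, Complex.exp (Complex.I * t * p.1)
          * Complex.exp (Complex.I * t * p.2) ∂(P.prod R) := by
        congr 1; ext p; rw [← Complex.exp_add]; push_cast; ring
    _ = charFun' P t * charFun' R t :=
        integral_prod_mul (fun x : ℝ => Complex.exp (Complex.I * t * x))
          (fun x : ℝ => Complex.exp (Complex.I * t * x))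

lemma charFun'_efron (θ σ ε : ℝ) (hσ : 0 < σ) (hε0 : 0 ≤ ε) (hε1 : ε ≤ 1)
    (Q : Measure ℝ) [IsProbabilityMeasure Q] (t : ℝ) :
    charFun' (efron θ σ ε Q) t
      = ((1-ε : ℝ):ℂ) * (Complex.exp (Complex.I * t * θ)
          * Complex.exp (-((σ^2:ℝ):ℂ) * (t:ℂ)^2 / 2))
        + ((ε : ℝ):ℂ) * (charFun' Q t * Complex.exp (-((σ^2:ℝ):ℂ) * (t:ℂ)^2 / 2)) := by
  have hvar : (0:ℝ) < σ^2 := by positivity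
  rw [charFun', efron, integral_add_measure
    (((integ_e _ t)).smul_measure ENNReal.ofReal_ne_top)
    (((integ_e _ t)).smul_measure ENNReal.ofReal_ne_top),
    integral_smul_measure, integral_smul_measure,
    ENNReal.toReal_ofReal (by linarith), ENNReal.toReal_ofReal hε0]
  have h1 : ∫ x, Complex.exp (Complex.I * t * x) ∂(gauss θ (σ^2))
      = Complex.exp (Complex.I * t * θ) * Complex.exp (-((σ^2:ℝ):ℂ) * (t:ℂ)^2 / 2) :=
    charFun'_gauss θ hvar t
  have h2 : ∫ x, Complex.exp (Complex.I * t * x) ∂(Measure.conv Q (gauss 0 (σ^2)))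
      = charFun' Q t * Complex.exp (-((σ^2:ℝ):ℂ) * (t:ℂ)^2 / 2) := by
    rw [show (∫ x, Complex.exp (Complex.I * t * x) ∂(Measure.conv Q (gauss 0 (σ^2))))
        = charFun' (Measure.conv Q (gauss 0 (σ^2))) t from rfl,
      charFun'_conv, charFun'_gauss 0 hvar t]
    simp only [Complex.ofReal_zero, mul_zero, Complex.exp_zero, one_mul]
  rw [h1, h2]
  simp only [Complex.real_smul]

lemma ups_eq (θ σ ε : ℝ) (hσ : 0 < σ) (hε0 : 0 ≤ ε) (hε1 : ε ≤ 1)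
    (Q : Measure ℝ) [IsProbabilityMeasure Q] (t μ : ℝ) :
    UpsKnown σ (charFun' (efron θ σ ε Q)) t μ
      = 2 * ((1-ε : ℝ):ℂ) * Complex.exp (Complex.I * (((θ - μ : ℝ)):ℂ) * t)
        + 2 * ((ε : ℝ):ℂ) * Complex.exp (-(Complex.I * (μ:ℂ) * (t:ℂ))) * charFun' Q t
        - 1 := by
  rw [UpsKnown, charFun'_efron θ σ ε hσ hε0 hε1 Q t]
  have hA : Complex.exp (-(Complex.I * (μ : ℂ) * (t : ℂ)) + ((σ : ℂ) ^ 2 * (t : ℂ) ^ 2 / 2))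
      * (Complex.exp (Complex.I * t * θ) * Complex.exp (-((σ^2:ℝ):ℂ) * (t:ℂ)^2 / 2))
      = Complex.exp (Complex.I * (((θ - μ : ℝ)):ℂ) * t) := by
    rw [← Complex.exp_add, ← Complex.exp_add]; congr 1; push_cast; ring
  have hB : Complex.exp (-(Complex.I * (μ : ℂ) * (t : ℂ)) + ((σ : ℂ) ^ 2 * (t : ℂ) ^ 2 / 2))
      * Complex.exp (-((σ^2:ℝ):ℂ) * (t:ℂ)^2 / 2)
      = Complex.exp (-(Complex.I * (μ:ℂ) * (t:ℂ))) := by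
    rw [← Complex.exp_add]; congr 1; push_cast; ring
  linear_combination (2 * ((1-ε : ℝ):ℂ)) * hA + (2 * ((ε : ℝ):ℂ) * charFun' Q t) * hB

/-- Lemma 2.1: in the known-variance setting with `ε ∈ [0,1/2)`, a candidate `μ` equals the
true `θ` if and only if `t ↦ Υ(t;μ)` is the characteristic function of a probability
measure. -/
theorem true_candidate_known_variance (θ σ ε : ℝ) (hσ : 0 < σ)
    (hε : ε ∈ Set.Ico (0:ℝ) (1/2)) (Q : Measure ℝ) (hQ : IsProbabilityMeasure Q) (μ : ℝ) :
    μ = θ ↔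
      ∃ ν : Measure ℝ, IsProbabilityMeasure ν ∧
        ∀ t : ℝ, charFun' ν t = UpsKnown σ (charFun' (efron θ σ ε Q)) t μ := by
  obtain ⟨hε0, hε2⟩ := hε
  have hε1 : ε ≤ 1 := by linarith
  constructor
  · rintro rfl
    refine ⟨ENNReal.ofReal (1 - 2*ε) • Measure.dirac 0
      + ENNReal.ofReal (2*ε) • Measure.map (· + (-μ)) Q, ?_, ?_⟩
    · haveI : IsProbabilityMeasure (Measure.map (· + (-μ)) Q) :=
        Measure.isProbabilityMeasure_map (measurable_add_const (-μ)).aemeasurable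
      constructor
      simp only [Measure.add_apply, Measure.smul_apply, smul_eq_mul,
        measure_univ, mul_one]
      rw [← ENNReal.ofReal_add (by linarith) (by linarith)]
      norm_num
    · intro t
      rw [ups_eq μ σ ε hσ hε0 hε1 Q t μ]
      rw [charFun', integral_add_measure
        (((integ_e _ t)).smul_measure ENNReal.ofReal_ne_top)
        ((integ_e (Measure.map (· + (-μ)) Q) t).smul_measure ENNReal.ofReal_ne_top),
        integral_smul_measure, integral_smul_measure,
        ENNReal.toReal_ofReal (by linarith), ENNReal.toReal_ofReal (by linarith),
        integral_dirac]
      rw [show (∫ x, Complex.exp (Complex.I * t * x) ∂(Measure.map (· + (-μ)) Q))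
          = charFun' (Measure.map (· + (-μ)) Q) t from rfl, charFun'_map_add]
      simp only [sub_self, Complex.ofReal_zero, mul_zero, zero_mul, Complex.exp_zero,
        Complex.real_smul, Complex.ofReal_neg]
      rw [show Complex.I * (t:ℂ) * -(μ:ℂ) = -(Complex.I * (μ:ℂ) * (t:ℂ)) by ring]
      push_cast
      ring
  · rintro ⟨ν, hν, h⟩
    by_contra hne
    have hθμ : θ - μ ≠ 0 := fun hc => hne (sub_eq_zero.mp hc).symm
    set t0 : ℝ := π / (θ - μ) with ht0
    have hexp : Complex.exp (Complex.I * (((θ - μ : ℝ)):ℂ) * t0)  = -1 := by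
      rw [show Complex.I * (((θ - μ : ℝ)):ℂ) * (t0:ℂ)
          = (((θ - μ) * t0 : ℝ) : ℂ) * Complex.I by push_cast; ring,
        show (θ - μ) * t0 = π by rw [ht0]; field_simp]
      exact Complex.exp_pi_mul_I
    set u : ℂ := Complex.exp (-(Complex.I * (μ:ℂ) * (t0:ℂ))) * charFun' Q t0 with hu
    have hnu : ‖u‖ ≤ 1 := by
      rw [hu, norm_mul, show -(Complex.I * (μ:ℂ) * (t0:ℂ))
          = Complex.I * ((-μ : ℝ):ℂ) * (t0:ℂ) by push_cast; ring]
      have := norm_charFun'_le Q t0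
      calc ‖Complex.exp (Complex.I * ((-μ:ℝ):ℂ) * (t0:ℂ))‖ * ‖charFun' Q t0‖
          = ‖charFun' Q t0‖ := by rw [abs_e]; ring
        _ ≤ 1 := this
    have hval : charFun' ν t0 = -(((2*(1-ε)+1 : ℝ)):ℂ) + ((2*ε : ℝ):ℂ) * u := by
      rw [h t0, ups_eq θ σ ε hσ hε0 hε1 Q t0 μ, hexp, hu]
      push_cast
      ring
    have hb : ‖charFun' ν t0‖ ≤ 1 := norm_charFun'_le ν t0
    have h1 : ‖(-(((2*(1-ε)+1 : ℝ)):ℂ))‖ = 2*(1-ε)+1 := by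
      rw [norm_neg, Complex.norm_real, Real.norm_eq_abs, abs_of_nonneg (by linarith)]
    have h2 : ‖((2*ε : ℝ):ℂ) * u‖ ≤ 2*ε := by
      rw [norm_mul, Complex.norm_real, Real.norm_eq_abs, abs_of_nonneg (by linarith)]
      calc (2*ε) * ‖u‖ ≤ (2*ε) * 1 :=
            mul_le_mul_of_nonneg_left hnu (by linarith)
        _ = 2*ε := by ring
    have key : (2*(1-ε)+1 : ℝ) ≤ ‖charFun' ν t0‖ + 2*ε := by
      calc (2*(1-ε)+1 : ℝ) = ‖(-(((2*(1-ε)+1 : ℝ)):ℂ))‖ := h1.symm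
        _ = ‖charFun' ν t0 - ((2*ε : ℝ):ℂ) * u‖ := by rw [hval]; congr 1; ring
        _ ≤ ‖charFun' ν t0‖ + ‖((2*ε : ℝ):ℂ) * u‖ := norm_sub_le _ _
        _ ≤ ‖charFun' ν t0‖ + 2*ε := by linarith
    linarith
end

section
/- For every b ∈ [−π, π] and every ε ∈ [0, 1/2): |−1 + 2(1−ε)·e^{−ib}| − 2ε ≥ 1 + 2(b/π)² − 4ε. In particular, the Euclidean distance from 0 to the closed disk in ℂ of center −1 + 2(1−ε)·e^{−ib} and radius 2ε is at least 1 + 2(b/π)² − 4ε. -/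
open Real

/-- Quadratic gap (Lemma 3.3): for `b ∈ [−π,π]` and `ε ∈ [0,1/2)`,
`|−1 + 2(1−ε)e^{−ib}| − 2ε ≥ 1 + 2(b/π)² − 4ε`; in particular the distance from `0` to the
closed disk of center `−1 + 2(1−ε)e^{−ib}` and radius `2ε` is at least `1 + 2(b/π)² − 4ε`. -/
theorem quadratic_gap (b ε : ℝ) (hb : b ∈ Set.Icc (-π) π)
    (hε : ε ∈ Set.Ico (0:ℝ) (1/2)) :
    1 + 2 * (b / π) ^ 2 - 4 * ε ≤
        ‖-1 + 2 * (1 - (ε : ℂ)) * Complex.exp (-(Complex.I * (b : ℂ)))‖ - 2 * ε ∧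
    1 + 2 * (b / π) ^ 2 - 4 * ε ≤
        Metric.infDist (0 : ℂ)
          (Metric.closedBall (-1 + 2 * (1 - (ε : ℂ)) * Complex.exp (-(Complex.I * (b : ℂ))))
            (2 * ε)) := by
  obtain ⟨hb1, hb2⟩ := hb
  obtain ⟨hε0, hε1⟩ := hε
  have hπ : (0:ℝ) < π := Real.pi_pos
  set z : ℂ := -1 + 2 * (1 - (ε : ℂ)) * Complex.exp (-(Complex.I * (b : ℂ))) with hz
  set t : ℝ := 1 - ε with ht
  have ht1 : (1:ℝ)/2 < t := by simp [ht]; linarith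
  set q : ℝ := (b / π) ^ 2 with hq
  have hq0 : 0 ≤ q := sq_nonneg _
  have hq1 : q ≤ 1 := by
    rw [hq, div_pow, div_le_one (by positivity)]
    exact sq_le_sq' (by linarith) hb2
  -- Jordan-type bound
  have hcos : Real.cos b ≤ 1 - 2 / π ^ 2 * b ^ 2 := by
    apply Real.cos_le_one_sub_mul_cos_sq
    rw [abs_le]; exact ⟨hb1, hb2⟩
  -- the real form of z
  have hzre : z = Complex.ofReal (-1 + 2 * t * Real.cos b) +
      Complex.ofReal (-(2 * t * Real.sin b)) * Complex.I := by
    rw [hz, Complex.exp_eq_exp_re_mul_sin_add_cos]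
    simp [Complex.ext_iff, ht, Real.cos_neg, Real.sin_neg]
  have habs_sq : (‖z‖) ^ 2 =
      (-1 + 2 * t * Real.cos b) ^ 2 + (-(2 * t * Real.sin b)) ^ 2 := by
    rw [← Complex.normSq_eq_norm_sq, hzre, Complex.normSq_add_mul_I]
  set M : ℝ := 1 + 2 * q - 2 * ε with hM
  have hM0 : 0 ≤ M := by rw [hM]; nlinarith
  have hMle : M ≤ ‖z‖ := by
    have hsq : M ^ 2 ≤ (‖z‖) ^ 2 := by
      rw [habs_sq]
      have hs : Real.sin b ^ 2 = 1 - Real.cos b ^ 2 := by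
        have := Real.sin_sq_add_cos_sq b
        linarith
      have hqb : q = b ^ 2 / π ^ 2 := by rw [hq, div_pow]
      have hcos' : Real.cos b ≤ 1 - 2 * q := by
        have h2 : 2 / π ^ 2 * b ^ 2 = 2 * (b ^ 2 / π ^ 2) := by ring
        rw [hqb]; linarith
      have hexp : (-1 + 2 * t * Real.cos b) ^ 2 + (-(2 * t * Real.sin b)) ^ 2
          = 1 - 4 * t * Real.cos b + 4 * t ^ 2 := by
        linear_combination (4 * t ^ 2) * (Real.sin_sq_add_cos_sq b)
      rw [hexp]
      have ht0 : (0:ℝ) ≤ t := by linarith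
      nlinarith [mul_le_mul_of_nonneg_left hcos' ht0,
        mul_nonneg hq0 (by linarith : (0:ℝ) ≤ 1 - q), ht1]
    calc M = Real.sqrt (M ^ 2) := (Real.sqrt_sq hM0).symm
      _ ≤ Real.sqrt ((‖z‖) ^ 2) := Real.sqrt_le_sqrt hsq
      _ = ‖z‖ := Real.sqrt_sq (norm_nonneg z)
  have h1 : 1 + 2 * (b / π) ^ 2 - 4 * ε ≤ ‖z‖ - 2 * ε := by
    rw [← hq]; linarith [hMle]
  refine ⟨h1, ?_⟩
  have hne : (Metric.closedBall z (2 * ε)).Nonempty :=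
    ⟨z, Metric.mem_closedBall_self (by linarith)⟩
  by_contra hcon
  push_neg at hcon
  obtain ⟨y, hy, hdy⟩ := (Metric.infDist_lt_iff hne).1 hcon
  rw [Metric.mem_closedBall] at hy
  have : dist (0:ℂ) z ≤ dist (0:ℂ) y + dist y z := dist_triangle _ _ _
  have hd : dist (0:ℂ) z = ‖z‖ := by
    simp [Complex.dist_eq]
  have hc : dist z y = dist y z := dist_comm z y
  rw [hd] at this
  linarith [hMle, hy, hdy]
end

section
/- Let K be a positive integer divisible by 4 and let x ∈ (0,1). Then: (a) | Σ_{k=0}^{K} (−1)^{K−k} · C(K,k) / (k − K/2 + x) − (1/x)·C(K,K/2) | ≤ ((1 − πx·cot(πx))/x) · C(K,K/2); (b) if moreover x ∈ (0,1/4), then (π/4)/x · C(K,K/2) ≤ Σ_{k=0}^{K} (−1)^{K−k} · C(K,k) / (k − K/2 + x) ≤ (2 − π/4)/x · C(K,K/2). -/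
open Real Finset

/-- Partial fraction identity. -/
lemma pf_sum : ∀ (n : ℕ) (y : ℝ), (∀ j ∈ Finset.range (n+1), y + (j:ℝ) ≠ 0) →
    ∑ k ∈ Finset.range (n+1), (-1:ℝ)^k * (Nat.choose n k : ℝ) / (y + k)
      = (Nat.factorial n : ℝ) / ∏ j ∈ Finset.range (n+1), (y + (j:ℝ)) := by
  intro n
  induction n with
  | zero => intro y hy; simp
  | succ n ih =>
    intro y hy
    have h0 : y ≠ 0 := by simpa using hy 0 (by simp)
    have htop : y + ((n:ℝ)+1) ≠ 0 := by
      have := hy (n+1) (Finset.self_mem_range_succ _); push_cast at this; exact this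
    have hyn : ∀ j ∈ Finset.range (n+1), y + (j:ℝ) ≠ 0 := by
      intro j hj
      exact hy j (Finset.mem_range.2 (by simp at hj; omega))
    have hy1 : ∀ j ∈ Finset.range (n+1), (y+1) + (j:ℝ) ≠ 0 := by
      intro j hj
      have hj' : j + 1 ∈ Finset.range (n+2) := by simp at hj ⊢; omega
      have := hy (j+1) hj'
      push_cast at this
      intro h; apply this; linarith
    have S1 := ih y hyn
    have S2 := ih (y+1) hy1
    have hsum : ∑ k ∈ Finset.range (n+2), (-1:ℝ)^k * (Nat.choose (n+1) k : ℝ) / (y + k)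
        = (∑ k ∈ Finset.range (n+1), (-1:ℝ)^k * (Nat.choose n k : ℝ) / (y + k))
          - ∑ k ∈ Finset.range (n+1), (-1:ℝ)^k * (Nat.choose n k : ℝ) / ((y+1) + k) := by
      rw [Finset.sum_range_succ'
        (fun k => (-1:ℝ)^k * (Nat.choose (n+1) k : ℝ) / (y + k)) (n+1)]
      have e1 : ∀ k ∈ Finset.range (n+1),
          (-1:ℝ)^(k+1) * (Nat.choose (n+1) (k+1) : ℝ) / (y + ((k+1:ℕ):ℝ))
          = (-1:ℝ)^(k+1) * (Nat.choose n (k+1) : ℝ) / (y + ((k+1:ℕ):ℝ))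
            - (-1:ℝ)^k * (Nat.choose n k : ℝ) / ((y+1) + (k:ℝ)) := by
        intro k hk
        have hden : y + ((k+1:ℕ):ℝ) = (y+1) + (k:ℝ) := by push_cast; ring
        rw [Nat.choose_succ_succ, hden, ← sub_div]
        congr 1
        push_cast
        rw [pow_succ]
        ring
      rw [Finset.sum_congr rfl e1, Finset.sum_sub_distrib]
      have e2 : (∑ k ∈ Finset.range (n+1),
            (-1:ℝ)^(k+1) * (Nat.choose n (k+1) : ℝ) / (y + ((k+1:ℕ):ℝ)))
          + (-1:ℝ)^0 * (Nat.choose (n+1) 0 : ℝ) / (y + ((0:ℕ):ℝ))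
          = ∑ k ∈ Finset.range (n+1), (-1:ℝ)^k * (Nat.choose n k : ℝ) / (y + k) := by
        have := Finset.sum_range_succ'
          (fun k => (-1:ℝ)^k * (Nat.choose n k : ℝ) / (y + k)) (n+1)
        rw [Finset.sum_range_succ] at this
        simp only [Nat.choose_succ_self, Nat.cast_zero, mul_zero, zero_mul, zero_div,
          add_zero, Nat.choose_zero_right, Nat.cast_one] at this ⊢
        linarith [this]
      linarith [e2]
    rw [hsum, S1, S2]
    have hP1 : ∏ j ∈ Finset.range (n+2), (y + (j:ℝ))
        = (∏ j ∈ Finset.range (n+1), (y + (j:ℝ))) * (y + ((n:ℝ)+1)) := by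
      rw [Finset.prod_range_succ]; push_cast; ring_nf
    have hP2 : ∏ j ∈ Finset.range (n+2), (y + (j:ℝ))
        = (∏ j ∈ Finset.range (n+1), ((y+1) + (j:ℝ))) * y := by
      rw [Finset.prod_range_succ' (fun j => y + (j:ℝ)) (n+1)]
      push_cast
      congr 1
      · apply Finset.prod_congr rfl
        intro j hj; push_cast; ring
      · norm_num
    have hpne : ∏ j ∈ Finset.range (n+1), (y + (j:ℝ)) ≠ 0 := Finset.prod_ne_zero_iff.2 hyn
    have hpne' : ∏ j ∈ Finset.range (n+1), ((y+1) + (j:ℝ)) ≠ 0 := Finset.prod_ne_zero_iff.2 hy1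
    rw [hP1]
    have hq : (∏ j ∈ Finset.range (n+1), ((y+1) + (j:ℝ)))
        = (∏ j ∈ Finset.range (n+1), (y + (j:ℝ))) * (y + ((n:ℝ)+1)) / y := by
      field_simp
      rw [mul_comm y, ← hP2, hP1]
    rw [hq]
    rw [Nat.factorial_succ]
    push_cast
    field_simp
    ring

lemma prod_pair (x : ℝ) : ∀ (M : ℕ),
    ∏ j ∈ Finset.range (2*M+1), (x - (M:ℝ) + (j:ℝ))
      = x * ∏ i ∈ Finset.range M, (x^2 - ((i:ℝ)+1)^2) := by
  intro M
  induction M with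
  | zero => simp
  | succ M ih =>
    have h1 : 2*(M+1)+1 = (2*M+1) + 1 + 1 := by ring
    rw [h1, Finset.prod_range_succ, Finset.prod_range_succ'
      (fun j => x - ((M+1:ℕ):ℝ) + (j:ℝ)) (2*M+1)]
    have e : ∀ j ∈ Finset.range (2*M+1),
        x - ((M+1:ℕ):ℝ) + ((j+1:ℕ):ℝ) = x - (M:ℝ) + (j:ℝ) := by
      intro j hj; push_cast; ring
    rw [Finset.prod_congr rfl e, ih, Finset.prod_range_succ]
    push_cast
    ring



lemma factor_bounds (x : ℝ) (hx0 : 0 < x) (hx1 : x < 1) (i : ℕ) :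
    0 < 1 - x^2/((i:ℝ)+1)^2 ∧ 1 - x^2/((i:ℝ)+1)^2 ≤ 1 := by
  have hi : (0:ℝ) ≤ i := Nat.cast_nonneg i
  have h1 : (1:ℝ) ≤ ((i:ℝ)+1)^2 := by nlinarith
  have h3 : x^2/((i:ℝ)+1)^2 ≤ x^2 := by
    rw [div_le_iff₀ (by linarith : (0:ℝ) < ((i:ℝ)+1)^2)]
    nlinarith
  have h0 : 0 ≤ x^2/((i:ℝ)+1)^2 := by positivity
  constructor
  · nlinarith
  · linarith

lemma tcos_le (t : ℝ) (ht0 : 0 < t) (htπ : t < π) : t * (1 + Real.cos t) ≤ 2 * Real.sin t := by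
  have hu0 : 0 < t/2 := by linarith
  have hu2 : t/2 < π/2 := by linarith
  have hcu : 0 < Real.cos (t/2) := Real.cos_pos_of_mem_Ioo ⟨by linarith [Real.pi_pos], hu2⟩
  have htan := Real.lt_tan hu0 hu2
  rw [Real.tan_eq_sin_div_cos] at htan
  have h1 : t/2 * Real.cos (t/2) < Real.sin (t/2) := by rwa [lt_div_iff₀ hcu] at htan
  have hsin2 : Real.sin t = 2 * Real.sin (t/2) * Real.cos (t/2) := by
    rw [show t = 2 * (t/2) by ring, Real.sin_two_mul]
    ring_nf
  have hcos2 : Real.cos t = 2 * Real.cos (t/2)^2 - 1 := by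
    rw [show t = 2 * (t/2) by ring, Real.cos_two_mul]
    ring_nf
  nlinarith [mul_le_mul_of_nonneg_right h1.le (by positivity : (0:ℝ) ≤ 2 * Real.cos (t/2))]

lemma key_quarter (t : ℝ) (ht0 : 0 < t) (ht4 : t < π/4) : t ≤ (2 - π/4) * Real.sin t := by
  have hπg : (3.141592:ℝ) < π := Real.pi_gt_d6
  have hπl : π < 3.15 := Real.pi_lt_d2
  have ht1 : t ≤ 1 := by linarith
  have hcube : t - t ^ 3 / 4 < Real.sin t := by
    linarith [Real.sin_gt_sub_cube ht0, pow_pos ht0 3]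
  have hA := mul_le_mul_of_nonneg_left hcube.le (by linarith : (0:ℝ) ≤ 2 - π/4)
  have hB : t * t < (π/4) * (π/4) := mul_lt_mul'' ht4 ht4 ht0.le ht0.le
  have hC := mul_le_mul_of_nonneg_right hB.le ht0.le
  have hc : (2 - π/4) * ((π/4) * (π/4)) / 4 ≤ 1 - π/4 := by
    have hπ2g : (9.8696:ℝ) < π^2 := by nlinarith [hπg]
    have hπ2l : π^2 < (9.9225:ℝ) := by nlinarith [hπl, Real.pi_pos]
    have hπ3g : (31:ℝ) < π^3 := by
      have h9 : (9.8696:ℝ) * 3.141592 < π^2 * π :=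
        mul_lt_mul'' hπ2g hπg (by norm_num) (by norm_num)
      nlinarith [h9]
    linarith [hπ2l, hπ3g, hπl]
  have hct := mul_le_mul_of_nonneg_right hc ht0.le
  have hE := mul_le_mul_of_nonneg_left hC (by linarith : (0:ℝ) ≤ (2 - π/4)/4)
  linarith [hA, hE, hct]

set_option maxHeartbeats 1000000 in
/-- Control of the alternating binomial sum (Lemma D.6): for `K` a positive multiple of 4
and `x ∈ (0,1)`,
(a) `|Σ_{k=0}^{K} (−1)^{K−k} C(K,k)/(k − K/2 + x) − C(K,K/2)/x|
       ≤ ((1 − πx·cot(πx))/x)·C(K,K/2)`;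
(b) if moreover `x ∈ (0,1/4)`, the sum lies between `(π/4)/x·C(K,K/2)` and
`(2 − π/4)/x·C(K,K/2)`. -/
theorem control_alternation (K : ℕ) (hK : 0 < K) (h4 : 4 ∣ K)
    (x : ℝ) (hx : x ∈ Set.Ioo (0:ℝ) 1) :
    |(∑ k ∈ Finset.range (K + 1),
        (-1 : ℝ) ^ (K - k) * (Nat.choose K k : ℝ) / ((k : ℝ) - (K : ℝ) / 2 + x)) -
      (1 / x) * (Nat.choose K (K / 2) : ℝ)| ≤
        ((1 - π * x * Real.cot (π * x)) / x) * (Nat.choose K (K / 2) : ℝ) ∧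
    (x < 1 / 4 →
      (π / 4) / x * (Nat.choose K (K / 2) : ℝ) ≤
        (∑ k ∈ Finset.range (K + 1),
          (-1 : ℝ) ^ (K - k) * (Nat.choose K k : ℝ) / ((k : ℝ) - (K : ℝ) / 2 + x)) ∧
      (∑ k ∈ Finset.range (K + 1),
          (-1 : ℝ) ^ (K - k) * (Nat.choose K k : ℝ) / ((k : ℝ) - (K : ℝ) / 2 + x)) ≤
        (2 - π / 4) / x * (Nat.choose K (K / 2) : ℝ)) := by
  obtain ⟨m, hm⟩ := h4
  obtain ⟨hx0, hx1⟩ := hx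
  set M : ℕ := 2 * m with hM
  have hKM : K = 2 * M := by omega
  have hK2 : K / 2 = M := by omega
  have hKc : (K:ℝ) = 2 * (M:ℝ) := by rw [hKM]; push_cast; ring
  -- rewrite the sum
  have hpow : ∀ k, k ≤ K → (-1:ℝ)^(K-k) = (-1:ℝ)^k := by
    intro k hk
    have hKeven : Even K := ⟨2*m, by omega⟩
    rcases Nat.even_or_odd k with he | ho
    · rw [he.neg_one_pow, (hKeven.tsub he).neg_one_pow]
    · rw [ho.neg_one_pow, (Nat.Even.sub_odd hk hKeven ho).neg_one_pow]
  have hsum_eq : (∑ k ∈ Finset.range (K + 1),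
        (-1 : ℝ) ^ (K - k) * (Nat.choose K k : ℝ) / ((k : ℝ) - (K : ℝ) / 2 + x))
      = ∑ k ∈ Finset.range (K+1), (-1:ℝ)^k * (Nat.choose K k : ℝ) / ((x - (M:ℝ)) + k) := by
    apply Finset.sum_congr rfl
    intro k hk
    rw [hpow k (by simp at hk; omega)]
    congr 1
    rw [hKc]; ring
  -- nonvanishing denominators
  have hy : ∀ j ∈ Finset.range (K+1), (x - (M:ℝ)) + (j:ℝ) ≠ 0 := by
    intro j hj h
    have h1 : (0:ℝ) < (((M:ℤ) - (j:ℤ) : ℤ):ℝ) := by push_cast; linarith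
    have h2 : (((M:ℤ) - (j:ℤ) : ℤ):ℝ) < 1 := by push_cast; linarith
    have h1' : (0:ℤ) < (M:ℤ) - (j:ℤ) := by exact_mod_cast h1
    have h2' : (M:ℤ) - (j:ℤ) < 1 := by exact_mod_cast h2
    omega
  have hpf := pf_sum K (x - (M:ℝ)) hy
  have hprod := prod_pair x M
  -- product in terms of Q
  set Q : ℝ := ∏ i ∈ Finset.range M, (1 - x^2/((i:ℝ)+1)^2) with hQ
  have hfac : ∏ i ∈ Finset.range M, (x^2 - ((i:ℝ)+1)^2)
      = (Nat.factorial M : ℝ)^2 * Q := by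
    have hsign : ∀ i ∈ Finset.range M, x^2 - ((i:ℝ)+1)^2
        = (-1) * (((i:ℝ)+1)^2 * (1 - x^2/((i:ℝ)+1)^2)) := by
      intro i _
      have h : ((i:ℝ)+1) ≠ 0 := by positivity
      field_simp
      ring
    rw [Finset.prod_congr rfl hsign, Finset.prod_mul_distrib, Finset.prod_mul_distrib,
      Finset.prod_const]
    have hMeven : (-1:ℝ)^M = 1 := Even.neg_one_pow ⟨m, by omega⟩
    have hfac2 : ∏ i ∈ Finset.range M, ((i:ℝ)+1)^2 = (Nat.factorial M : ℝ)^2 := by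
      rw [Finset.prod_pow]
      have : ∏ i ∈ Finset.range M, ((i:ℝ)+1) = (Nat.factorial M : ℝ) := by
        exact_mod_cast congrArg (Nat.cast (R := ℝ)) (Finset.prod_range_add_one_eq_factorial M)
      rw [this]
    rw [Finset.card_range, hMeven, hfac2, one_mul]
  -- basic positivity
  have hQfac : ∀ i ∈ Finset.range M, 0 < 1 - x^2/((i:ℝ)+1)^2 :=
    fun i _ => (factor_bounds x hx0 hx1 i).1
  have hQ0 : 0 < Q := Finset.prod_pos hQfac
  have hQ1 : Q ≤ 1 := Finset.prod_le_one
    (fun i _ => (factor_bounds x hx0 hx1 i).1.le)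
    (fun i _ => (factor_bounds x hx0 hx1 i).2)
  have hfacM : (0:ℝ) < (Nat.factorial M : ℝ) := by exact_mod_cast Nat.factorial_pos M
  -- central binomial coefficient
  set a : ℝ := (Nat.choose K (K/2) : ℝ) with ha
  have hax : 0 < a := by
    rw [ha]; exact_mod_cast Nat.choose_pos (by omega : K/2 ≤ K)
  have hchoose : (Nat.factorial K : ℝ) = a * (Nat.factorial M : ℝ)^2 := by
    have h := Nat.choose_mul_factorial_mul_factorial (show M ≤ K by omega)
    have hKsub : K - M = M := by omega
    rw [hKsub] at h
    rw [ha, hK2]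
    push_cast [← h]
    ring
  -- the sum equals a / (x * Q)
  have hS : (∑ k ∈ Finset.range (K + 1),
        (-1 : ℝ) ^ (K - k) * (Nat.choose K k : ℝ) / ((k : ℝ) - (K : ℝ) / 2 + x))
      = a / (x * Q) := by
    rw [hsum_eq, hpf]
    rw [show K + 1 = 2*M + 1 by omega] 
    rw [hprod, hfac, hchoose]
    field_simp
  -- Euler product bound : sin (πx) ≤ πx * Q
  set t : ℝ := π * x with htdef
  have ht0 : 0 < t := mul_pos pi_pos hx0
  have htπ : t < π := by
    have := pi_pos; nlinarith
  have hs0 : 0 < sin t := sin_pos_of_pos_of_lt_pi ht0 htπ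
  have hsin : sin t ≤ t * Q := by
    apply le_of_tendsto (Real.tendsto_euler_sin_prod x)
    filter_upwards [Filter.eventually_ge_atTop M] with n hn
    have hsplit := Finset.prod_range_mul_prod_Ico
      (fun j => (1:ℝ) - x^2/((j:ℝ)+1)^2) hn
    have hIco : ∏ j ∈ Finset.Ico M n, ((1:ℝ) - x^2/((j:ℝ)+1)^2) ≤ 1 := Finset.prod_le_one
      (fun i _ => (factor_bounds x hx0 hx1 i).1.le)
      (fun i _ => (factor_bounds x hx0 hx1 i).2)
    have hIco0 : 0 ≤ ∏ j ∈ Finset.Ico M n, ((1:ℝ) - x^2/((j:ℝ)+1)^2) :=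
      Finset.prod_nonneg (fun i _ => (factor_bounds x hx0 hx1 i).1.le)
    calc π * x * ∏ j ∈ Finset.range n, ((1:ℝ) - x^2/((j:ℝ)+1)^2)
        = (t * Q) * ∏ j ∈ Finset.Ico M n, ((1:ℝ) - x^2/((j:ℝ)+1)^2) := by
          rw [htdef, hQ, ← hsplit]; ring
      _ ≤ (t * Q) * 1 := by
          apply mul_le_mul_of_nonneg_left hIco (by positivity)
      _ = t * Q := by ring
  have htc : t * (1 + cos t) ≤ 2 * sin t := tcos_le t ht0 htπ
  clear hsum_eq hpf hprod hfac hQfac hy hpow hchoose hfacM hKc hK2 hKM hm hK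
  clear_value M Q a t
  -- key comparison 1/Q ≤ 2 - t cos t / sin t
  have h2' : sin t ≤ (2 * sin t - t * cos t) * Q := by
    have hstep : 0 ≤ 2 * sin t - t * cos t - t := by nlinarith
    nlinarith [mul_nonneg hstep hQ0.le, hsin]
  have h2 : 1/Q ≤ 2 - t * (cos t / sin t) := by
    rw [div_le_iff₀ hQ0]
    have e : (2 - t * (cos t / sin t)) * Q = ((2 * sin t - t * cos t) * Q) / sin t := by
      field_simp
    rw [e, le_div_iff₀ hs0]
    linarith
  have h1div : a / (x * Q) = (a / x) * (1 / Q) := by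
    field_simp
  have haxpos : 0 ≤ a / x := by positivity
  -- lower bound : (1/x) * a ≤ S
  have hlow : (1/x) * a ≤ a / (x * Q) := by
    have hone : (1:ℝ) ≤ 1/Q := by
      rw [le_div_iff₀ hQ0]; linarith
    have h5 := mul_le_mul_of_nonneg_left hone haxpos
    have e0 : (1/x) * a = a/x * 1 := by ring
    rw [h1div]; linarith
  constructor
  · -- part (a)
    rw [hS, Real.cot_eq_cos_div_sin]
    rw [abs_of_nonneg (by linarith)]
    have := mul_le_mul_of_nonneg_left h2 haxpos
    rw [h1div]
    have hfin : (a/x) * (2 - t * (cos t / sin t)) - (1/x) * a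
        = ((1 - t * (cos t / sin t)) / x) * a := by ring
    nlinarith [this]
  · -- part (b)
    intro hx4
    have hπ4 : π ≤ 4 := pi_le_four
    have hπg : 3.141592 < π := pi_gt_d6
    have hπl : π < 3.15 := pi_lt_d2
    constructor
    · -- lower
      rw [hS]
      have h14 : π/4 ≤ 1 := by linarith
      have hxx : (π/4)/x ≤ 1/x := by
        gcongr
      linarith [mul_le_mul_of_nonneg_right hxx hax.le, hlow]
    · -- upper
      rw [hS, h1div]
      have ht4 : t < π/4 := by
        have := mul_lt_mul_of_pos_left hx4 pi_pos
        rw [htdef]; linarith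
      have hkey : t ≤ (2 - π/4) * sin t := key_quarter t ht0 ht4
      have hQt : 1/Q ≤ 2 - π/4 := by
        have hts : t / sin t ≤ 2 - π/4 := by
          rw [div_le_iff₀ hs0]; linarith
        have h1Q : 1/Q ≤ t / sin t := by
          rw [div_le_div_iff₀ hQ0 hs0]
          linarith
        linarith
      have h6 := mul_le_mul_of_nonneg_left hQt haxpos
      have e1 : (2 - π/4)/x * a = a/x * (2 - π/4) := by ring
      linarith
end

section
/- Fix δ ∈ (0,1) and εmax ∈ (0,1/2), and let n be an integer with n ≥ 8·(1−2εmax)^{−2}·log(2/δ). Set D = Φ^{−1}( (1/2 + √(log(2/δ)/(2n))) / (1 − εmax) ), where Φ^{−1} is the inverse of the standard normal cumulative distribution function (the stated condition on n guarantees the argument lies in (0,1)). Let M(x) denote the sample median of x = (x₁,…,xₙ), i.e. the ⌈n/2⌉-th order statistic. Then for every θ ∈ ℝ, every σ > 0, and every probability measure Q on ℝ: P_{θ,σ,εmax,Q}^{⊗n}( { x ∈ ℝⁿ : |M(x) − θ| ≤ D·σ } ) ≥ 1 − δ. -/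
open MeasureTheory ProbabilityTheory Real
open scoped ENNReal NNReal

/-- The standard normal cumulative distribution function `Φ`. -/
noncomputable def stdNormalCDF (t : ℝ) : ℝ :=
  ((gaussianReal 0 1) (Set.Iic t)).toReal

/-- The sample median, i.e. the `⌈n/2⌉`-th order statistic of `x`
(the `k`-th order statistic equals `inf {m : #{j : x_j ≤ m} ≥ k}`). -/
noncomputable def sampleMedian (n : ℕ) (x : Fin n → ℝ) : ℝ :=
  sInf {m : ℝ | (n + 1) / 2 ≤ (Finset.univ.filter (fun j => x j ≤ m)).card}

/-! ### Auxiliary lemmas -/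

lemma lintegral_pi_prod_aux {n : ℕ} (P : Measure ℝ) [IsProbabilityMeasure P]
    {g : ℝ → ℝ≥0∞} (hg : Measurable g) :
    ∫⁻ x, ∏ j, g (x j) ∂(Measure.pi fun _ : Fin n => P) = (∫⁻ y, g y ∂P) ^ n := by
  induction n with
  | zero => simp
  | succ n ih =>
    have h := measurePreserving_piFinSuccAbove (fun _ : Fin (n+1) => P) 0
    have hprod : Measurable fun y : Fin n → ℝ => ∏ j, g (y j) :=
      Finset.measurable_prod _ fun j _ => hg.comp (measurable_pi_apply j)
    have hF : Measurable fun z : ℝ × (Fin n → ℝ) => g z.1 * ∏ j, g (z.2 j) :=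
      (hg.comp measurable_fst).mul (hprod.comp measurable_snd)
    calc ∫⁻ x, ∏ j, g (x j) ∂(Measure.pi fun _ : Fin (n+1) => P)
        = ∫⁻ x, g (x 0) * ∏ j : Fin n, g (x j.succ) ∂(Measure.pi fun _ : Fin (n+1) => P) := by
          simp_rw [Fin.prod_univ_succ]
      _ = ∫⁻ z, g z.1 * ∏ j, g (z.2 j) ∂(P.prod (Measure.pi fun _ : Fin n => P)) := by
          rw [← h.map_eq, lintegral_map hF (MeasurableEquiv.measurable _)]
          congr 1
      _ = (∫⁻ y, g y ∂P) * (∫⁻ y, g y ∂P) ^ n := by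
          rw [lintegral_prod_mul hg.aemeasurable hprod.aemeasurable, ih]
      _ = (∫⁻ y, g y ∂P) ^ (n+1) := by ring

lemma count_tail (n k : ℕ) (hk : (n : ℝ) / 2 ≤ (k : ℝ)) (P : Measure ℝ) [IsProbabilityMeasure P]
    (p : ℝ → Prop) [DecidablePred p] (hA : MeasurableSet {y | p y}) {s : ℝ}
    (hs0 : 0 < s) (hs : s < 1/2)
    (hPA : P {y | p y} ≤ ENNReal.ofReal (1/2 - s)) :
    (Measure.pi fun _ : Fin n => P) {x | k ≤ (Finset.univ.filter fun j => p (x j)).card}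
      ≤ ENNReal.ofReal (Real.exp (-(2 * n * s^2))) := by
  set a : ℝ := (1 + 2*s) / (1 - 2*s) with ha_def
  have h2s : (0:ℝ) < 1 - 2*s := by linarith
  have ha1 : (1:ℝ) ≤ a := by
    rw [le_div_iff₀ h2s]; linarith
  have ha0 : (0:ℝ) < a := lt_of_lt_of_le one_pos ha1
  set c : ℝ≥0∞ := ENNReal.ofReal a with hc_def
  have hc1 : (1:ℝ≥0∞) ≤ c := by
    rw [hc_def, ← ENNReal.ofReal_one]; exact ENNReal.ofReal_le_ofReal ha1
  set g : ℝ → ℝ≥0∞ := fun y => if p y then c else 1 with hg_def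
  have hg : Measurable g := Measurable.ite hA measurable_const measurable_const
  set Pi := (Measure.pi fun _ : Fin n => P) with hPi
  set E : Set (Fin n → ℝ) := {x | k ≤ (Finset.univ.filter fun j => p (x j)).card} with hE
  have hprodg : ∀ x : Fin n → ℝ, ∏ j, g (x j) = c ^ (Finset.univ.filter fun j => p (x j)).card := by
    intro x
    rw [hg_def]
    simp only []
    rw [Finset.prod_ite, Finset.prod_const, Finset.prod_const, one_pow, mul_one]
  have hprodmeas : Measurable fun x : Fin n → ℝ => ∏ j, g (x j) :=
    Finset.measurable_prod _ fun j _ => hg.comp (measurable_pi_apply j)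
  have hmarkov : c ^ k * Pi E ≤ (∫⁻ y, g y ∂P) ^ n := by
    calc c ^ k * Pi E = ∫⁻ _ in E, c ^ k ∂Pi := (setLIntegral_const E (c ^ k)).symm
      _ ≤ ∫⁻ x in E, ∏ j, g (x j) ∂Pi := by
          refine setLIntegral_mono hprodmeas fun x hx => ?_
          rw [hprodg x]
          exact pow_le_pow_right₀ hc1 hx
      _ ≤ ∫⁻ x, ∏ j, g (x j) ∂Pi := setLIntegral_le_lintegral _ _
      _ = (∫⁻ y, g y ∂P) ^ n := lintegral_pi_prod_aux P hg
  have hint : ∫⁻ y, g y ∂P ≤ ENNReal.ofReal (1 + 2*s) := by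
    have hgeq : g = fun y => Set.indicator {y | p y} (fun _ => c - 1) y + 1 := by
      funext y
      by_cases hy : p y
      · simp [hg_def, hy, Set.indicator_of_mem, tsub_add_cancel_of_le hc1]
      · simp [hg_def, hy]
    rw [hgeq, lintegral_add_right _ measurable_const, lintegral_indicator_const hA, lintegral_one,
      measure_univ]
    have hc1' : c - 1 = ENNReal.ofReal (a - 1) := by
      rw [ENNReal.ofReal_sub _ zero_le_one, ENNReal.ofReal_one]
    calc (c - 1) * P {y | p y} + 1
        ≤ ENNReal.ofReal (a - 1) * ENNReal.ofReal (1/2 - s) + 1 := by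
          rw [hc1']; exact add_le_add (by gcongr) le_rfl
      _ = ENNReal.ofReal ((a - 1) * (1/2 - s) + 1) := by
          rw [← ENNReal.ofReal_mul (by linarith), ← ENNReal.ofReal_one,
            ← ENNReal.ofReal_add (mul_nonneg (by linarith) (by linarith)) zero_le_one]
      _ = ENNReal.ofReal (1 + 2*s) := by
          congr 1
          rw [ha_def]
          field_simp
          ring
  have hck : c ^ k = ENNReal.ofReal (a ^ k) := by
    rw [ENNReal.ofReal_pow ha0.le]
  have hckpos : c ^ k ≠ 0 := by
    rw [hck]; positivity
  have hcktop : c ^ k ≠ ∞ := by rw [hck]; exact ENNReal.ofReal_ne_top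
  have hπE : Pi E ≤ ENNReal.ofReal ((1 + 2*s) ^ n / a ^ k) := by
    have h1 : Pi E ≤ (ENNReal.ofReal (1 + 2*s)) ^ n / c ^ k := by
      rw [ENNReal.le_div_iff_mul_le (Or.inl hckpos) (Or.inl hcktop), mul_comm]
      exact hmarkov.trans (pow_le_pow_left' hint n)
    have h2 : (ENNReal.ofReal (1 + 2*s)) ^ n / c ^ k = ENNReal.ofReal ((1 + 2*s) ^ n / a ^ k) := by
      rw [← ENNReal.ofReal_pow (by linarith : (0:ℝ) ≤ 1 + 2*s), hck,
        ENNReal.ofReal_div_of_pos (pow_pos ha0 k)]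
    exact h1.trans_eq h2
  refine hπE.trans (ENNReal.ofReal_le_ofReal ?_)
  have h12s : (0:ℝ) < 1 + 2*s := by linarith
  have hak : a ^ ((n:ℝ)/2) ≤ a ^ (k:ℝ) :=
    Real.rpow_le_rpow_of_exponent_le ha1 hk
  have hsq : (0:ℝ) ≤ 1 - 4*s^2 := by nlinarith
  calc (1 + 2*s) ^ n / a ^ k
      = (1 + 2*s) ^ (n:ℝ) / a ^ ((k:ℕ):ℝ) := by
        simp [Real.rpow_natCast]
    _ ≤ (1 + 2*s) ^ (n:ℝ) / a ^ ((n:ℝ)/2) := by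
        gcongr
    _ = ((1 + 2*s) ^ (2:ℝ)) ^ ((n:ℝ)/2) / a ^ ((n:ℝ)/2) := by
        rw [← Real.rpow_mul h12s.le]
        congr 1
        ring
    _ = (((1 + 2*s) ^ (2:ℝ)) / a) ^ ((n:ℝ)/2) := by
        rw [Real.div_rpow (Real.rpow_nonneg h12s.le _) ha0.le]
    _ = (1 - 4*s^2) ^ ((n:ℝ)/2) := by
        congr 1
        rw [Real.rpow_two]
        rw [ha_def]
        field_simp
        ring
    _ ≤ (Real.exp (-(4*s^2))) ^ ((n:ℝ)/2) := by
        apply Real.rpow_le_rpow hsq _ (by positivity)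
        nlinarith [Real.add_one_le_exp (-(4*s^2))]
    _ = Real.exp (-(2 * n * s^2)) := by
        rw [← Real.exp_mul]
        congr 1
        ring

lemma gauss_Iic (θ σ : ℝ) (hσ : 0 < σ) (c : ℝ) :
    gauss θ (σ^2) (Set.Iic (θ + c*σ)) = ENNReal.ofReal (stdNormalCDF c) := by
  have h1 : (gaussianReal 0 1).map (σ * ·) = gaussianReal 0 (Real.toNNReal (σ^2)) := by
    rw [gaussianReal_map_const_mul σ, mul_zero]
    congr 1
    ext
    simp [Real.toNNReal, max_eq_left (sq_nonneg σ)]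
  have h2 : gauss θ (σ^2) = ((gaussianReal 0 1).map (σ * ·)).map (· + θ) := by
    rw [h1, gaussianReal_map_add_const, zero_add, gauss]
  rw [h2, Measure.map_apply (measurable_id'.add_const θ) measurableSet_Iic,
    Measure.map_apply (measurable_id'.const_mul σ) (by measurability)]
  have hset : ((σ * ·) ⁻¹' ((· + θ) ⁻¹' Set.Iic (θ + c*σ))) = Set.Iic c := by
    ext y
    simp only [Set.mem_preimage, Set.mem_Iic]
    constructor
    · intro h; nlinarith
    · intro h; nlinarith
  rw [hset, stdNormalCDF, ENNReal.ofReal_toReal (measure_ne_top _ _)]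

lemma stdN_neg (c : ℝ) :
    (gaussianReal 0 1) (Set.Iic (-c)) = 1 - (gaussianReal 0 1) (Set.Iic c) := by
  have hmap : (gaussianReal 0 1).map ((-1 : ℝ) * ·) = gaussianReal 0 1 := by
    rw [gaussianReal_map_const_mul (-1 : ℝ), mul_zero]
    congr 1
    ext
    norm_num
  have hsingleton : (gaussianReal 0 1) {c} = 0 := by
    rw [gaussianReal_of_var_ne_zero _ (by norm_num),
      withDensity_apply _ (measurableSet_singleton c)]
    simp
  have h1 : (gaussianReal 0 1) (Set.Iic (-c)) = (gaussianReal 0 1) (Set.Ici c) := by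
    conv_lhs => rw [← hmap]
    rw [Measure.map_apply (measurable_id'.const_mul (-1)) measurableSet_Iic]
    congr 1
    ext y
    simp only [Set.mem_preimage, Set.mem_Iic, Set.mem_Ici]
    constructor <;> intro h <;> linarith
  have h2 : (gaussianReal 0 1) (Set.Ici c) = (gaussianReal 0 1) (Set.Ioi c) := by
    rw [← Set.Ioi_union_left,
      measure_union (Set.disjoint_singleton_right.mpr (by simp)) (measurableSet_singleton c),
      hsingleton, add_zero]
  rw [h1, h2, ← Set.compl_Iic, prob_compl_eq_one_sub measurableSet_Iic]

lemma median_between {n : ℕ} (x : Fin n → ℝ) (t₁ t₂ : ℝ)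
    (h1 : (Finset.univ.filter fun j => x j ≤ t₁).card < (n + 1) / 2)
    (h2 : (Finset.univ.filter fun j => t₂ < x j).card < (n + 1) / 2) :
    t₁ ≤ sampleMedian n x ∧ sampleMedian n x ≤ t₂ := by
  set k := (n + 1) / 2 with hk
  set S := {m : ℝ | k ≤ (Finset.univ.filter (fun j => x j ≤ m)).card} with hS
  have hk2 : 2 * k ≤ n + 1 := by omega
  have ht₂ : t₂ ∈ S := by
    have hsplit : (Finset.univ.filter fun j => x j ≤ t₂).card
        + (Finset.univ.filter fun j => ¬ (x j ≤ t₂)).card = n := by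
      rw [Finset.card_filter_add_card_filter_not]
      simp
    have hco : (Finset.univ.filter fun j => ¬ (x j ≤ t₂)).card
        = (Finset.univ.filter fun j => t₂ < x j).card := by
      congr 1
      apply Finset.filter_congr
      intro j _
      simp [not_le]
    rw [hco] at hsplit
    have : k ≤ (Finset.univ.filter fun j => x j ≤ t₂).card := by omega
    exact this
  have hlb : ∀ m ∈ S, t₁ ≤ m := by
    intro m hm
    by_contra hcon
    push_neg at hcon
    have hsub : (Finset.univ.filter fun j => x j ≤ m)
        ⊆ (Finset.univ.filter fun j => x j ≤ t₁) := by
      intro j hj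
      simp only [Finset.mem_filter, Finset.mem_univ, true_and] at hj ⊢
      linarith
    have := Finset.card_le_card hsub
    have hmem : k ≤ (Finset.univ.filter fun j => x j ≤ m).card := hm
    omega
  constructor
  · exact le_csInf ⟨t₂, ht₂⟩ hlb
  · exact csInf_le ⟨t₁, hlb⟩ ht₂

set_option maxHeartbeats 1000000 in
/-- Robustness of the sample median on Efron's model (Lemma C.3): if
`n ≥ 8(1−2εmax)^{−2} log(2/δ)` and `D = Φ^{−1}((1/2 + √(log(2/δ)/(2n)))/(1−εmax))`, then
`|median − θ| ≤ D·σ` with probability at least `1−δ`, uniformly over `θ, σ, Q`. -/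
theorem sample_median_pilot (δ εmax : ℝ)
    (hδ : δ ∈ Set.Ioo (0:ℝ) 1) (hεm : εmax ∈ Set.Ioo (0:ℝ) (1/2))
    (n : ℕ) (hn : 8 / (1 - 2 * εmax) ^ 2 * Real.log (2 / δ) ≤ (n : ℝ))
    (D : ℝ)
    (hD : stdNormalCDF D = (1 / 2 + Real.sqrt (Real.log (2 / δ) / (2 * n))) / (1 - εmax)) :
    ∀ (θ σ : ℝ), 0 < σ → ∀ Q : Measure ℝ, IsProbabilityMeasure Q →
      ENNReal.ofReal (1 - δ) ≤
        iid n (efron θ σ εmax Q) {x | |sampleMedian n x - θ| ≤ D * σ} := by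
  intro θ σ hσ Q hQ
  obtain ⟨hδ0, hδ1⟩ := hδ
  obtain ⟨hε0, hε2⟩ := hεm
  set L := Real.log (2 / δ) with hL_def
  have hL : 0 < L := Real.log_pos (by rw [lt_div_iff₀ hδ0]; linarith)
  have h12e : (0:ℝ) < 1 - 2 * εmax := by linarith
  have hnpos : (0:ℝ) < (n:ℝ) := lt_of_lt_of_le (by positivity) hn
  have hn0 : n ≠ 0 := by exact_mod_cast hnpos.ne'
  set s := Real.sqrt (L / (2 * n)) with hs_def
  have hs0 : 0 < s := Real.sqrt_pos.mpr (by positivity)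
  have hns : 2 * (n:ℝ) * s ^ 2 = L := by
    rw [hs_def, Real.sq_sqrt (by positivity)]
    field_simp
  have hn' : 8 * L ≤ (n:ℝ) * (1 - 2*εmax)^2 := by
    have h := mul_le_mul_of_nonneg_right hn (sq_nonneg (1 - 2*εmax))
    calc 8 * L = 8 / (1 - 2*εmax)^2 * L * (1 - 2*εmax)^2 := by field_simp
      _ ≤ (n:ℝ) * (1 - 2*εmax)^2 := h
  have h8L : 8 * L ≤ (n:ℝ) := hn'.trans (by
    nlinarith [mul_pos hnpos hε0, mul_pos (mul_pos hnpos hε0)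
      (show (0:ℝ) < 1 - εmax by linarith)])
  have hs116 : s^2 ≤ 1/16 := by nlinarith [hns, h8L, hnpos]
  have hs12 : s < 1/2 := by nlinarith [hs116, hs0]
  -- the contaminated measure
  set P := efron θ σ εmax Q with hP_def
  have instGauss : IsProbabilityMeasure (gauss θ (σ^2)) := by
    rw [gauss]; infer_instance
  have instGauss0 : IsProbabilityMeasure (gauss 0 (σ^2)) := by
    rw [gauss]; infer_instance
  have instConv : IsProbabilityMeasure (Measure.conv Q (gauss 0 (σ^2))) := by
    infer_instance
  have instP : IsProbabilityMeasure P := by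
    constructor
    rw [hP_def, efron]
    simp only [Measure.add_apply, Measure.smul_apply, smul_eq_mul, measure_univ, mul_one]
    rw [← ENNReal.ofReal_add (by linarith) (by linarith)]
    norm_num
  -- CDF values
  have hΦle : stdNormalCDF D ≤ 1 := by
    rw [stdNormalCDF]
    exact ENNReal.toReal_le_of_le_ofReal one_pos.le (by simpa using prob_le_one)
  have hΦD : (1 - εmax) * stdNormalCDF D = 1/2 + s := by
    rw [hD]
    have hne : (1:ℝ) - εmax ≠ 0 := by linarith
    field_simp
  have hsle : 1/2 + s ≤ 1 - εmax := by
    calc 1/2 + s = (1 - εmax) * stdNormalCDF D := hΦD.symm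
      _ ≤ (1 - εmax) * 1 := by
          apply mul_le_mul_of_nonneg_left hΦle (by linarith)
      _ = 1 - εmax := mul_one _
  have hofD : ENNReal.ofReal (stdNormalCDF D) = (gaussianReal 0 1) (Set.Iic D) := by
    rw [stdNormalCDF, ENNReal.ofReal_toReal (measure_ne_top _ _)]
  -- upper bound for lower tail
  have hp1 : P (Set.Iic (θ - D * σ)) ≤ ENNReal.ofReal (1/2 - s) := by
    have ht : θ - D * σ = θ + (-D) * σ := by ring
    have hg : gauss θ (σ^2) (Set.Iic (θ - D * σ)) = ENNReal.ofReal (1 - stdNormalCDF D) := by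
      rw [ht, gauss_Iic θ σ hσ (-D)]
      have h2 : stdNormalCDF (-D) = 1 - stdNormalCDF D := by
        rw [stdNormalCDF, stdNormalCDF, stdN_neg D,
          ENNReal.toReal_sub_of_le prob_le_one ENNReal.one_ne_top, ENNReal.toReal_one]
      rw [h2]
    rw [hP_def, efron]
    simp only [Measure.add_apply, Measure.smul_apply, smul_eq_mul]
    calc ENNReal.ofReal (1 - εmax) * gauss θ (σ^2) (Set.Iic (θ - D*σ))
          + ENNReal.ofReal εmax * (Measure.conv Q (gauss 0 (σ^2))) (Set.Iic (θ - D*σ))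
        ≤ ENNReal.ofReal (1 - εmax) * ENNReal.ofReal (1 - stdNormalCDF D)
          + ENNReal.ofReal εmax * 1 := by
          gcongr
          · rw [hg]
          · exact prob_le_one
      _ = ENNReal.ofReal ((1 - εmax) * (1 - stdNormalCDF D) + εmax) := by
          rw [mul_one, ← ENNReal.ofReal_mul (by linarith),
            ← ENNReal.ofReal_add (mul_nonneg (by linarith) (by linarith)) (by linarith)]
      _ = ENNReal.ofReal (1/2 - s) := by
          congr 1
          linear_combination -hΦD
  -- upper bound for upper tail
  have hp2 : P (Set.Ioi (θ + D * σ)) ≤ ENNReal.ofReal (1/2 - s) := by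
    have hge : ENNReal.ofReal (1/2 + s) ≤ P (Set.Iic (θ + D * σ)) := by
      have hg2 : gauss θ (σ^2) (Set.Iic (θ + D * σ)) = ENNReal.ofReal (stdNormalCDF D) :=
        gauss_Iic θ σ hσ D
      calc ENNReal.ofReal (1/2 + s)
          = ENNReal.ofReal (1 - εmax) * ENNReal.ofReal (stdNormalCDF D) := by
            rw [← ENNReal.ofReal_mul (by linarith), hΦD]
        _ ≤ P (Set.Iic (θ + D * σ)) := by
            rw [hP_def, efron]
            simp only [Measure.add_apply, Measure.smul_apply, smul_eq_mul]
            rw [hg2]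
            exact le_add_right le_rfl
    have : P (Set.Ioi (θ + D * σ)) = 1 - P (Set.Iic (θ + D * σ)) := by
      rw [← Set.compl_Iic, prob_compl_eq_one_sub measurableSet_Iic]
    rw [this]
    calc 1 - P (Set.Iic (θ + D * σ)) ≤ 1 - ENNReal.ofReal (1/2 + s) :=
          tsub_le_tsub_left hge 1
      _ = ENNReal.ofReal (1/2 - s) := by
          rw [← ENNReal.ofReal_one, ← ENNReal.ofReal_sub _ (by linarith)]
          congr 1
          ring
  -- counting events
  set k := (n + 1) / 2 with hk_def
  have hkn : (n : ℝ) / 2 ≤ (k : ℝ) := by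
    have : n ≤ 2 * k := by omega
    have := (Nat.cast_le (α := ℝ)).mpr this
    push_cast at this
    linarith
  set E₁ : Set (Fin n → ℝ) :=
    {x | k ≤ (Finset.univ.filter fun j => x j ≤ θ - D * σ).card} with hE₁
  set E₂ : Set (Fin n → ℝ) :=
    {x | k ≤ (Finset.univ.filter fun j => θ + D * σ < x j).card} with hE₂
  have hcount1 : Measurable fun x : Fin n → ℝ =>
      (Finset.univ.filter fun j => x j ≤ θ - D * σ).card := by
    simp_rw [Finset.card_filter]
    exact Finset.measurable_sum _ fun j _ =>
      Measurable.ite (measurableSet_le (measurable_pi_apply j) measurable_const)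
        measurable_const measurable_const
  have hcount2 : Measurable fun x : Fin n → ℝ =>
      (Finset.univ.filter fun j => θ + D * σ < x j).card := by
    simp_rw [Finset.card_filter]
    exact Finset.measurable_sum _ fun j _ =>
      Measurable.ite (measurableSet_lt measurable_const (measurable_pi_apply j))
        measurable_const measurable_const
  have hE₁m : MeasurableSet E₁ := hcount1 MeasurableSpace.measurableSet_top
  have hE₂m : MeasurableSet E₂ := hcount2 MeasurableSpace.measurableSet_top
  have hb1 : iid n P E₁ ≤ ENNReal.ofReal (Real.exp (-(2 * n * s^2))) :=
    count_tail n k hkn P (fun y => y ≤ θ - D * σ) measurableSet_Iic hs0 hs12 hp1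
  have hb2 : iid n P E₂ ≤ ENNReal.ofReal (Real.exp (-(2 * n * s^2))) :=
    count_tail n k hkn P (fun y => θ + D * σ < y) measurableSet_Ioi hs0 hs12 hp2
  have hexp : Real.exp (-(2 * n * s^2)) = δ / 2 := by
    rw [hns, hL_def, ← Real.log_inv, inv_div, Real.exp_log (by positivity)]
  have hunion : iid n P (E₁ ∪ E₂) ≤ ENNReal.ofReal δ := by
    calc iid n P (E₁ ∪ E₂) ≤ iid n P E₁ + iid n P E₂ := measure_union_le _ _
      _ ≤ ENNReal.ofReal (δ/2) + ENNReal.ofReal (δ/2) := by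
          rw [← hexp]; exact add_le_add hb1 hb2
      _ = ENNReal.ofReal δ := by
          rw [← ENNReal.ofReal_add (by linarith) (by linarith)]
          norm_num
  have hsub : (E₁ ∪ E₂)ᶜ ⊆ {x | |sampleMedian n x - θ| ≤ D * σ} := by
    intro x hx
    simp only [Set.mem_compl_iff, Set.mem_union, not_or, hE₁, hE₂, Set.mem_setOf_eq,
      not_le] at hx
    obtain ⟨h1, h2⟩ := hx
    obtain ⟨hlo, hhi⟩ := median_between x (θ - D * σ) (θ + D * σ) h1 h2
    simp only [Set.mem_setOf_eq, abs_le]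
    constructor <;> linarith
  have instPi : IsProbabilityMeasure (iid n P) := by
    rw [iid]; infer_instance
  calc ENNReal.ofReal (1 - δ) = 1 - ENNReal.ofReal δ := by
        rw [← ENNReal.ofReal_one, ← ENNReal.ofReal_sub _ (by linarith)]
    _ ≤ 1 - iid n P (E₁ ∪ E₂) := tsub_le_tsub_left hunion 1
    _ = iid n P ((E₁ ∪ E₂)ᶜ) := (prob_compl_eq_one_sub (hE₁m.union hE₂m)).symm
    _ ≤ iid n P {x | |sampleMedian n x - θ| ≤ D * σ} := measure_mono hsub
end
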